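/- arXiv:1706.06854 — 6 statements merged into one kernel-verified Lean document; each statement's English description precedes it below -/
import Mathlib

section
/- Let n ≥ 2 and let Q(z) = 1 + c₁z + c₂z² + ⋯ + c_{n-1}z^{n-1} + zⁿ be a complex polynomial (with c₁, …, c_{n-1} ∈ ℂ). If Re Q(z) > 0 for all z in the open unit disk 𝔻, then c₁ = c₂ = ⋯ = c_{n-1} = 0. -/
open Polynomial Finset Complex

private lemma sq_dvd_of_double_root {R : Polynomial ℂ} {z : ℂ}
    (h0 : R.eval z = 0) (h1 : R.derivative.eval z = 0) :
    (X - C z) ^ 2 ∣ R := by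
  obtain ⟨S, hS⟩ := (dvd_iff_isRoot (p := R)).mpr h0
  have hS0 : S.eval z = 0 := by
    have := congrArg (fun p => Polynomial.eval z (Polynomial.derivative p)) hS
    simp [derivative_mul] at this
    simpa [this] using h1
  obtain ⟨T, hT⟩ := (dvd_iff_isRoot (p := S)).mpr hS0
  exact ⟨T, by rw [hS, hT]; ring⟩

noncomputable def zt (n j : ℕ) : ℂ := Complex.exp ((((2 * j + 1 : ℕ) : ℝ) * Real.pi / n : ℝ) * I)

lemma zt_pow_n {n : ℕ} (hn : n ≠ 0) (j : ℕ) : zt n j ^ n = -1 := by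
  rw [zt, ← Complex.exp_nat_mul]
  have hn' : (n : ℝ) ≠ 0 := Nat.cast_ne_zero.mpr hn
  have hre : (n : ℝ) * (((2 * j + 1 : ℕ) : ℝ) * Real.pi / n) = ((2 * j + 1 : ℕ) : ℝ) * Real.pi := by
    field_simp
  have h : ((n : ℂ)) * ((((2 * j + 1 : ℕ) : ℝ) * Real.pi / n : ℝ) * I)
      = ((2 * j + 1 : ℕ) : ℂ) * (Real.pi * I) := by
    rw [show ((n : ℂ)) * ((((2 * j + 1 : ℕ) : ℝ) * Real.pi / n : ℝ) * I)
        = (((n : ℝ) * (((2 * j + 1 : ℕ) : ℝ) * Real.pi / n) : ℝ) : ℂ) * I by push_cast; ring,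
      hre]
    push_cast; ring
  rw [h, Complex.exp_nat_mul, Complex.exp_pi_mul_I]
  exact Odd.neg_one_pow ⟨j, by ring⟩

lemma zt_norm (n j : ℕ) : ‖zt n j‖ = 1 := by
  simp only [zt]
  exact Complex.norm_exp_ofReal_mul_I _

lemma zt_ne_zero (n j : ℕ) : zt n j ≠ 0 := Complex.exp_ne_zero _

lemma zt_conj (n j : ℕ) : (starRingEnd ℂ) (zt n j) = (zt n j)⁻¹ := by
  rw [zt, ← Complex.exp_conj, ← Complex.exp_neg, map_mul, Complex.conj_ofReal, Complex.conj_I]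
  ring_nf
lemma zt_pow_eq (n k j : ℕ) (hn : n ≠ 0) :
    zt n j ^ k = Complex.exp ((((k : ℝ) * Real.pi / n : ℝ)) * I) *
      (Complex.exp (((2 * (k : ℝ) * Real.pi / n : ℝ)) * I)) ^ j := by
  rw [zt, ← Complex.exp_nat_mul, ← Complex.exp_nat_mul, ← Complex.exp_add]
  congr 1
  have hnc : (n : ℂ) ≠ 0 := Nat.cast_ne_zero.mpr hn
  push_cast
  field_simp
  ring

lemma zt_sum_pow {n k : ℕ} (hn : 2 ≤ n) (hk1 : 1 ≤ k) (hk : k ≤ n - 1) :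
    ∑ j ∈ range n, zt n j ^ k = 0 := by
  have hn0 : n ≠ 0 := by omega
  have hnc : (n : ℂ) ≠ 0 := Nat.cast_ne_zero.mpr hn0
  have hπ : Real.pi ≠ 0 := Real.pi_ne_zero
  set W : ℂ := Complex.exp (((2 * (k : ℝ) * Real.pi / n : ℝ)) * I) with hW
  have hWn : W ^ n = 1 := by
    rw [hW, ← Complex.exp_nat_mul]
    rw [Complex.exp_eq_one_iff]
    refine ⟨(k : ℤ), ?_⟩
    push_cast
    field_simp
  have hW1 : W ≠ 1 := by
    intro h
    rw [hW, Complex.exp_eq_one_iff] at h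
    obtain ⟨m, hm⟩ := h
    have him := congrArg Complex.im hm
    simp [Complex.mul_im, Complex.mul_re] at him
    -- him : 2 * k * π / n = m * (2 * π)  (roughly)
    have h2π : (2 * Real.pi : ℝ) ≠ 0 := by positivity
    have hnr : (n : ℝ) ≠ 0 := Nat.cast_ne_zero.mpr hn0
    have hreal : (k : ℝ) = (m : ℝ) * n := by
      field_simp at him
      have h' : (k : ℝ) * (2 * Real.pi) = ((m : ℝ) * n) * (2 * Real.pi) := by linear_combination (2 * Real.pi) * him
      exact mul_right_cancel₀ h2π h'
    have hint : (k : ℤ) = m * n := by exact_mod_cast hreal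
    have hkn : (k : ℤ) < n := by exact_mod_cast (by omega : k < n)
    have hk0 : (0 : ℤ) < k := by exact_mod_cast hk1
    have hn0' : (0 : ℤ) < n := by exact_mod_cast (by omega : 0 < n)
    rcases le_or_gt m 0 with h0 | h0
    · nlinarith
    · have : (1 : ℤ) ≤ m := h0
      nlinarith
  calc ∑ j ∈ range n, zt n j ^ k
      = Complex.exp ((((k : ℝ) * Real.pi / n : ℝ)) * I) * ∑ j ∈ range n, W ^ j := by
        rw [mul_sum]; exact Finset.sum_congr rfl fun j _ => zt_pow_eq n k j hn0
    _ = 0 := by rw [geom_sum_eq hW1, hWn]; simp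

lemma zt_inj {n : ℕ} (hn : 2 ≤ n) {i j : ℕ} (hi : i < n) (hj : j < n)
    (h : zt n i = zt n j) : i = j := by
  have hn0 : n ≠ 0 := by omega
  have hπ : Real.pi ≠ 0 := Real.pi_ne_zero
  have h1 : Complex.exp ((((2 * i + 1 : ℕ) : ℝ) * Real.pi / n - ((2 * j + 1 : ℕ) : ℝ) * Real.pi / n : ℝ) * I) = 1 := by
    rw [Complex.ofReal_sub, sub_mul, Complex.exp_sub, ← zt, ← zt, h]
    exact div_self (by rw [zt]; exact Complex.exp_ne_zero _)
  rw [Complex.exp_eq_one_iff] at h1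
  obtain ⟨m, hm⟩ := h1
  have him := congrArg Complex.im hm
  simp [Complex.mul_im, Complex.mul_re] at him
  have h2π : (2 * Real.pi : ℝ) ≠ 0 := by positivity
  have hnr : (n : ℝ) ≠ 0 := Nat.cast_ne_zero.mpr hn0
  have hreal : (i : ℝ) - j = (m : ℝ) * n := by
    field_simp at him
    have h' : ((i : ℝ) - j) * (2 * Real.pi) = ((m : ℝ) * n) * (2 * Real.pi) := by linear_combination Real.pi * him
    exact mul_right_cancel₀ h2π h'
  have hint : (i : ℤ) - j = m * n := by exact_mod_cast hreal
  have hi' : (i : ℤ) < n := by exact_mod_cast hi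
  have hj' : (j : ℤ) < n := by exact_mod_cast hj
  have hn0' : (0 : ℤ) < n := by exact_mod_cast (by omega : 0 < n)
  have hm0 : m = 0 := by
    rcases lt_trichotomy m 0 with h0 | h0 | h0
    · have : m ≤ -1 := by omega
      nlinarith [Int.ofNat_nonneg i, Int.ofNat_nonneg j]
    · exact h0
    · have : (1:ℤ) ≤ m := h0
      nlinarith [Int.ofNat_nonneg i, Int.ofNat_nonneg j]
  rw [hm0] at hint
  omega


lemma re_nonneg_circle (Q : Polynomial ℂ)
    (hpos : ∀ z : ℂ, ‖z‖ < 1 → 0 < (Q.eval z).re) :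
    ∀ z : ℂ, ‖z‖ = 1 → 0 ≤ (Q.eval z).re := by
  intro z hz
  have hcont : Filter.Tendsto (fun r : ℝ => (Q.eval ((r : ℂ) * z)).re)
      (nhdsWithin 1 (Set.Iio 1)) (nhds (Q.eval (((1 : ℝ) : ℂ) * z)).re) := by
    apply Filter.Tendsto.mono_left _ nhdsWithin_le_nhds
    exact (Complex.continuous_re.comp ((Q.continuous).comp
      ((Complex.continuous_ofReal.mul continuous_const)))).continuousAt
  have hev : ∀ᶠ r : ℝ in nhdsWithin 1 (Set.Iio 1), 0 ≤ (Q.eval ((r : ℂ) * z)).re := by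
    filter_upwards [Ioo_mem_nhdsLT_of_mem (by norm_num : (1:ℝ) ∈ Set.Ioc 0 1)] with r hr
    refine le_of_lt (hpos _ ?_)
    rw [norm_mul, Complex.norm_real, hz, mul_one, Real.norm_eq_abs, abs_of_pos hr.1]
    exact hr.2
  have := ge_of_tendsto hcont hev
  simpa using this

lemma deriv_re_zero (Q : Polynomial ℂ)
    (hnn : ∀ z : ℂ, ‖z‖ = 1 → 0 ≤ (Q.eval z).re) (θ : ℝ)
    (h0 : (Q.eval (Complex.exp ((θ : ℂ) * I))).re = 0) :
    (Q.derivative.eval (Complex.exp ((θ : ℂ) * I)) *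
      (Complex.exp ((θ : ℂ) * I) * I)).re = 0 := by
  set f : ℝ → ℝ := fun t => (Q.eval (Complex.exp ((t : ℂ) * I))).re with hf
  have hnorm : ∀ t : ℝ, ‖Complex.exp ((t : ℂ) * I)‖ = 1 := fun t => by
    simp [Complex.norm_exp_ofReal_mul_I]
  have hmin : IsLocalMin f θ := by
    apply Filter.Eventually.of_forall
    intro t
    rw [hf]
    simp only
    rw [h0]
    exact hnn _ (hnorm t)
  have hexp : ∀ w : ℂ, HasDerivAt (fun w : ℂ => Complex.exp (w * I))
      (Complex.exp (w * I) * I) w := by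
    intro w
    have h := (Complex.hasDerivAt_exp (w * I)).comp w ((hasDerivAt_id' w).mul_const I)
    rw [one_mul] at h
    exact h
  have he : HasDerivAt (fun w : ℂ => Q.eval (Complex.exp (w * I)))
      (Q.derivative.eval (Complex.exp ((θ:ℂ) * I)) * (Complex.exp ((θ:ℂ) * I) * I)) ((θ:ℝ):ℂ) :=
    (Q.hasDerivAt _).comp _ (hexp _)
  have hr : HasDerivAt (fun t : ℝ => Q.eval (Complex.exp ((t : ℂ) * I)))
      (Q.derivative.eval (Complex.exp ((θ:ℂ) * I)) * (Complex.exp ((θ:ℂ) * I) * I)) θ :=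
    he.comp_ofReal
  have hfd : HasDerivAt f ((Q.derivative.eval (Complex.exp ((θ:ℂ) * I)) *
      (Complex.exp ((θ:ℂ) * I) * I)).re) θ :=
    (Complex.reCLM.hasFDerivAt.comp_hasDerivAt θ hr)
  have := hmin.deriv_eq_zero
  rwa [hfd.deriv] at this
/-- If `n ≥ 2` and `Q(z) = 1 + c₁ z + ⋯ + c_{n-1} z^{n-1} + zⁿ` has positive real part on
the open unit disk, then all the middle coefficients vanish. -/
theorem middle_coeffs_vanish_of_pos_re (n : ℕ) (hn : 2 ≤ n) (c : ℕ → ℂ)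
    (Q : Polynomial ℂ)
    (hQ : Q = C 1 + (∑ k ∈ Finset.Icc 1 (n - 1), C (c k) * X ^ k) + X ^ n)
    (hpos : ∀ z : ℂ, ‖z‖ < 1 → 0 < (Q.eval z).re) :
    ∀ k ∈ Finset.Icc 1 (n - 1), c k = 0 := by
  have hn0 : n ≠ 0 := by omega
  have hnn := re_nonneg_circle Q hpos
  have hevalQ : ∀ z : ℂ, z ^ n = -1 →
      Q.eval z = ∑ k ∈ Finset.Icc 1 (n - 1), c k * z ^ k := by
    intro z hz
    rw [hQ]
    simp only [eval_add, eval_pow, eval_X, eval_C, eval_finset_sum, eval_mul, hz]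
    ring
  have hsum0 : ∑ j ∈ range n, Q.eval (zt n j) = 0 := by
    rw [Finset.sum_congr rfl fun j _ => hevalQ _ (zt_pow_n hn0 j), Finset.sum_comm]
    apply Finset.sum_eq_zero
    intro k hk
    rw [← mul_sum, zt_sum_pow hn (Finset.mem_Icc.mp hk).1 (Finset.mem_Icc.mp hk).2, mul_zero]
  have hre_zero : ∀ j ∈ range n, (Q.eval (zt n j)).re = 0 := by
    have hsum : ∑ j ∈ range n, (Q.eval (zt n j)).re = 0 := by
      rw [← Complex.re_sum, hsum0, Complex.zero_re]
    exact (Finset.sum_eq_zero_iff_of_nonneg fun j _ => hnn _ (zt_norm n j)).mp hsum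
  have hIm : ∀ j ∈ range n, ((zt n j) * Q.derivative.eval (zt n j)).im = 0 := by
    intro j hj
    have hD := deriv_re_zero Q hnn ((((2 * j + 1 : ℕ) : ℝ) * Real.pi / n : ℝ))
      (by rw [← zt]; exact hre_zero j hj)
    rw [← zt] at hD
    have h2 : (zt n j * Q.derivative.eval (zt n j) * I).re = 0 := by
      rw [show zt n j * Q.derivative.eval (zt n j) * I
        = Q.derivative.eval (zt n j) * (zt n j * I) by ring]
      exact hD
    rwa [Complex.mul_I_re, neg_eq_zero] at h2
  set R : Polynomial ℂ := ∑ k ∈ Finset.Icc 1 (n - 1),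
    (C (c k) * X ^ (n + k) + C ((starRingEnd ℂ) (c k)) * X ^ (n - k)) with hR
  have hdouble : ∀ j ∈ range n, (X - C (zt n j)) ^ 2 ∣ R := by
    intro j hj
    set ζ := zt n j with hζ
    have hζn : ζ ^ n = -1 := zt_pow_n hn0 j
    have hζ0 : ζ ≠ 0 := zt_ne_zero n j
    have hconj : (starRingEnd ℂ) ζ = ζ⁻¹ := zt_conj n j
    set A : ℂ := ∑ k ∈ Finset.Icc 1 (n - 1), c k * ζ ^ k with hA
    set B : ℂ := ∑ k ∈ Finset.Icc 1 (n - 1), (k : ℂ) * (c k * ζ ^ k) with hB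
    have hAre : A.re = 0 := by rw [hA, ← hevalQ ζ hζn]; exact hre_zero j hj
    have hAconj : (starRingEnd ℂ) A = -A := by
      have h := Complex.add_conj A
      rw [hAre] at h
      simp at h
      linear_combination h
    have hAconj' : ∑ k ∈ Finset.Icc 1 (n - 1), (starRingEnd ℂ) (c k * ζ ^ k) = -A := by
      rw [← map_sum, ← hA, hAconj]
    have hQder : ζ * Q.derivative.eval ζ = B - n := by
      rw [hQ]
      simp only [derivative_add, derivative_C, derivative_sum, derivative_C_mul_X_pow,
        derivative_X_pow, eval_add, eval_finset_sum, eval_mul, eval_C, eval_pow, eval_X,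
        zero_add, add_zero]
      rw [mul_add, mul_sum]
      have h1 : ∑ k ∈ Finset.Icc 1 (n - 1), ζ * (c k * k * ζ ^ (k - 1)) = B := by
        rw [hB]
        refine Finset.sum_congr rfl fun k hk => ?_
        have hk1 : 1 ≤ k := (Finset.mem_Icc.mp hk).1
        rw [show ζ ^ k = ζ ^ (k - 1) * ζ by rw [← pow_succ]; congr 1; omega]
        ring
      have h2 : ζ * ((n : ℂ) * ζ ^ (n - 1)) = (n : ℂ) * ζ ^ n := by
        rw [show ζ ^ n = ζ ^ (n - 1) * ζ by rw [← pow_succ]; congr 1; omega]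
        ring
      rw [h1, h2, hζn]
      ring
    have hBim : B.im = 0 := by
      have h := hIm j hj
      rw [← hζ, hQder] at h
      simpa using h
    have hBconj : (starRingEnd ℂ) B = B := Complex.conj_eq_iff_im.mpr hBim
    have hB' : ∑ k ∈ Finset.Icc 1 (n - 1), (k : ℂ) * (starRingEnd ℂ) (c k * ζ ^ k) = B := by
      rw [← hBconj, hB, map_sum]
      refine Finset.sum_congr rfl fun k _ => ?_
      simp [map_mul]
    have hp1 : ∀ k ∈ Finset.Icc 1 (n - 1), ζ ^ (n + k) = -ζ ^ k := by
      intro k _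
      rw [pow_add, hζn]
      ring
    have hp2 : ∀ k ∈ Finset.Icc 1 (n - 1), ζ ^ (n - k) = -(starRingEnd ℂ) (ζ ^ k) := by
      intro k hk
      have hkn : k ≤ n := by have := (Finset.mem_Icc.mp hk).2; omega
      have hmul : ζ ^ (n - k) * ζ ^ k = -1 := by
        rw [← pow_add, Nat.sub_add_cancel hkn, hζn]
      have hck : (starRingEnd ℂ) (ζ ^ k) = (ζ ^ k)⁻¹ := by
        rw [map_pow, hconj, inv_pow]
      have hzk : ζ ^ k ≠ 0 := pow_ne_zero _ hζ0
      rw [hck]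
      field_simp
      linear_combination hmul
    have hRζ : R.eval ζ = 0 := by
      have hev : R.eval ζ = ∑ k ∈ Finset.Icc 1 (n - 1),
          (c k * ζ ^ (n + k) + (starRingEnd ℂ) (c k) * ζ ^ (n - k)) := by
        rw [hR]
        simp only [eval_finset_sum, eval_add, eval_mul, eval_C, eval_pow, eval_X]
      rw [hev]
      calc ∑ k ∈ Finset.Icc 1 (n - 1),
            (c k * ζ ^ (n + k) + (starRingEnd ℂ) (c k) * ζ ^ (n - k))
          = ∑ k ∈ Finset.Icc 1 (n - 1),
            (-(c k * ζ ^ k) + -((starRingEnd ℂ) (c k * ζ ^ k))) := by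
            refine Finset.sum_congr rfl fun k hk => ?_
            rw [hp1 k hk, hp2 k hk, map_mul]
            ring
        _ = 0 := by
            rw [Finset.sum_add_distrib, Finset.sum_neg_distrib, Finset.sum_neg_distrib,
              ← hA, hAconj']
            ring
    have hR'ζ : R.derivative.eval ζ = 0 := by
      have key : ζ * R.derivative.eval ζ = 0 := by
        have hev : ζ * R.derivative.eval ζ = ∑ k ∈ Finset.Icc 1 (n - 1),
            ζ * (c k * (n + k : ℕ) * ζ ^ (n + k - 1)
               + (starRingEnd ℂ) (c k) * ((n - k : ℕ) : ℂ) * ζ ^ (n - k - 1)) := by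
          rw [hR]
          simp only [derivative_sum, derivative_add, derivative_C_mul_X_pow,
            eval_finset_sum, eval_add, eval_mul, eval_C, eval_pow, eval_X]
          rw [mul_sum]
        rw [hev]
        calc ∑ k ∈ Finset.Icc 1 (n - 1),
              ζ * (c k * (n + k : ℕ) * ζ ^ (n + k - 1)
                 + (starRingEnd ℂ) (c k) * ((n - k : ℕ) : ℂ) * ζ ^ (n - k - 1))
            = ∑ k ∈ Finset.Icc 1 (n - 1),
              ((-(n : ℂ)) * (c k * ζ ^ k) + (-1 : ℂ) * ((k : ℂ) * (c k * ζ ^ k))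
               + (-(n : ℂ)) * ((starRingEnd ℂ) (c k * ζ ^ k))
               + (k : ℂ) * ((starRingEnd ℂ) (c k * ζ ^ k))) := by
              refine Finset.sum_congr rfl fun k hk => ?_
              have hk1 : 1 ≤ k := (Finset.mem_Icc.mp hk).1
              have hkn1 : k ≤ n - 1 := (Finset.mem_Icc.mp hk).2
              have hkn : k ≤ n := by omega
              have e1 : ζ ^ (n + k - 1) * ζ = ζ ^ (n + k) := by
                rw [← pow_succ]; congr 1; omega
              have e2 : ζ ^ (n - k - 1) * ζ = ζ ^ (n - k) := by
                rw [← pow_succ]; congr 1; omega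
              have c2 : ((n - k : ℕ) : ℂ) = (n : ℂ) - k := Nat.cast_sub hkn
              calc ζ * (c k * (n + k : ℕ) * ζ ^ (n + k - 1)
                     + (starRingEnd ℂ) (c k) * ((n - k : ℕ) : ℂ) * ζ ^ (n - k - 1))
                  = c k * (n + k : ℕ) * (ζ ^ (n + k - 1) * ζ)
                     + (starRingEnd ℂ) (c k) * ((n - k : ℕ) : ℂ) * (ζ ^ (n - k - 1) * ζ) := by
                    ring
                _ = c k * (n + k : ℕ) * (-ζ ^ k)
                     + (starRingEnd ℂ) (c k) * ((n - k : ℕ) : ℂ) * (-(starRingEnd ℂ) (ζ ^ k)) := by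
                    rw [e1, e2, hp1 k hk, hp2 k hk]
                _ = (-(n : ℂ)) * (c k * ζ ^ k) + (-1 : ℂ) * ((k : ℂ) * (c k * ζ ^ k))
                     + (-(n : ℂ)) * ((starRingEnd ℂ) (c k * ζ ^ k))
                     + (k : ℂ) * ((starRingEnd ℂ) (c k * ζ ^ k)) := by
                    rw [c2, map_mul]
                    push_cast
                    ring
          _ = 0 := by
              simp only [Finset.sum_add_distrib, ← Finset.mul_sum]
              rw [← hA, ← hB, hAconj', hB']
              ring
      rcases mul_eq_zero.mp key with h | h
      · exact absurd h hζ0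
      · exact h
    exact sq_dvd_of_double_root hRζ hR'ζ
  -- product of the (X - ζ_j)^2 divides R
  have hprodvd : (∏ j ∈ range n, (X - C (zt n j)) ^ 2) ∣ R := by
    apply Finset.prod_dvd_of_coprime
    · intro i hi j hj hij
      simp only [Finset.coe_range, Set.mem_Iio] at hi hj
      have hne : zt n i ≠ zt n j := fun h => hij (zt_inj hn hi hj h)
      exact (isCoprime_X_sub_C_of_isUnit_sub (sub_ne_zero_of_ne hne).isUnit).pow
    · intro j hj
      exact hdouble j hj
  have hdegprod : (∏ j ∈ range n, (X - C (zt n j)) ^ 2).natDegree = 2 * n := by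
    rw [natDegree_prod _ _ fun j _ => pow_ne_zero 2 (X_sub_C_ne_zero _)]
    simp [natDegree_pow, natDegree_X_sub_C, Finset.sum_const, mul_comm]
  have hdegR : R.natDegree ≤ 2 * n - 1 := by
    rw [hR]
    apply natDegree_sum_le_of_forall_le
    intro k hk
    have hk1 : 1 ≤ k := (Finset.mem_Icc.mp hk).1
    have hkn1 : k ≤ n - 1 := (Finset.mem_Icc.mp hk).2
    apply natDegree_add_le_of_degree_le
    · exact (natDegree_C_mul_X_pow_le _ _).trans (by omega)
    · exact (natDegree_C_mul_X_pow_le _ _).trans (by omega)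
  have hR0 : R = 0 := by
    apply eq_zero_of_dvd_of_natDegree_lt hprodvd
    rw [hdegprod]
    omega
  intro k₀ hk₀
  have hk1 : 1 ≤ k₀ := (Finset.mem_Icc.mp hk₀).1
  have hkn1 : k₀ ≤ n - 1 := (Finset.mem_Icc.mp hk₀).2
  have hcoeff : R.coeff (n + k₀) = c k₀ := by
    rw [hR, finset_sum_coeff]
    rw [Finset.sum_eq_single_of_mem k₀ hk₀]
    · rw [coeff_add, coeff_C_mul_X_pow, coeff_C_mul_X_pow]
      rw [if_pos rfl, if_neg (by omega)]
      ring
    · intro k hk hkne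
      have hk1' : 1 ≤ k := (Finset.mem_Icc.mp hk).1
      have hkn1' : k ≤ n - 1 := (Finset.mem_Icc.mp hk).2
      rw [coeff_add, coeff_C_mul_X_pow, coeff_C_mul_X_pow]
      rw [if_neg (by omega), if_neg (by omega)]
      ring
  rw [hR0] at hcoeff
  simpa using hcoeff.symm
end

section
/- Let n ≥ 2 and let Q(z) = 1 + c₁z + c₂z² + ⋯ + c_{n-1}z^{n-1} + zⁿ be a complex polynomial (with c₁, …, c_{n-1} ∈ ℂ) such that Re Q(z) > 0 for all z in the open unit disk 𝔻. Then Re Q(ω) = 0 for every ω ∈ ℂ satisfying ωⁿ = −1. -/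
open Polynomial Finset

/-- If `n ≥ 2` and `Q(z) = 1 + c₁ z + ⋯ + c_{n-1} z^{n-1} + zⁿ` has positive real part on
the open unit disk, then `Re Q(ω) = 0` for every `n`-th root of `-1`. -/
theorem re_eq_zero_at_roots_of_neg_one (n : ℕ) (hn : 2 ≤ n) (c : ℕ → ℂ)
    (Q : Polynomial ℂ)
    (hQ : Q = C 1 + (∑ k ∈ Finset.Icc 1 (n - 1), C (c k) * X ^ k) + X ^ n)
    (hpos : ∀ z : ℂ, ‖z‖ < 1 → 0 < (Q.eval z).re) :
    ∀ ω : ℂ, ω ^ n = -1 → (Q.eval ω).re = 0 := by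
  intro ω hω
  -- |ω| = 1
  have hωnorm : ‖ω‖ = 1 := by
    have h : ‖ω‖ ^ n = 1 := by rw [← norm_pow, hω]; simp
    have h1 : ‖ω‖ ≤ 1 := by
      by_contra hc
      push_neg at hc
      have := one_lt_pow₀ hc (by omega : n ≠ 0)
      linarith
    have h2 : 1 ≤ ‖ω‖ := by
      by_contra hc
      push_neg at hc
      have := pow_lt_one₀ (norm_nonneg ω) hc (by omega : n ≠ 0)
      linarith
    linarith
  -- boundary nonnegativity
  have hbd : ∀ z : ℂ, ‖z‖ = 1 → 0 ≤ (Q.eval z).re := by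
    intro z hz
    have hc : Continuous fun r : ℝ => (Q.eval ((r : ℂ) * z)).re :=
      Complex.continuous_re.comp (Q.continuous.comp
        (Complex.continuous_ofReal.mul continuous_const))
    have ht : Filter.Tendsto (fun r : ℝ => (Q.eval ((r : ℂ) * z)).re)
        (nhdsWithin 1 (Set.Iio 1)) (nhds ((Q.eval z).re)) := by
      have h1 := hc.tendsto 1
      simp only [Complex.ofReal_one, one_mul] at h1
      exact h1.mono_left nhdsWithin_le_nhds
    refine ge_of_tendsto ht ?_
    filter_upwards [Ioo_mem_nhdsLT_of_mem (by norm_num : (1:ℝ) ∈ Set.Ioc (0:ℝ) 1)] with r hr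
    have : ‖(r : ℂ) * z‖ < 1 := by
      rw [norm_mul, hz, mul_one, Complex.norm_real, Real.norm_eq_abs,
        abs_of_pos hr.1]
      exact hr.2
    exact (hpos _ this).le
  obtain ⟨ζ, hζ⟩ : ∃ ζ : ℂ, IsPrimitiveRoot ζ n :=
    ⟨_, Complex.isPrimitiveRoot_exp n (by omega)⟩
  have hζ1 : ζ ^ n = 1 := hζ.pow_eq_one
  -- the sum of Q over ω ζ^j is zero
  have hsum : ∑ j ∈ range n, Q.eval (ω * ζ ^ j) = 0 := by
    have h1 : ∀ j ∈ range n, (ω * ζ ^ j) ^ n = -1 := by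
      intro j _
      rw [mul_pow, ← pow_mul, mul_comm j n, pow_mul, hζ1, one_pow, hω, mul_one]
    have h2 : ∀ k ∈ Icc 1 (n - 1), ∑ j ∈ range n, (ζ ^ k) ^ j = 0 := by
      intro k hk
      simp only [mem_Icc] at hk
      have hne : ζ ^ k ≠ 1 := hζ.pow_ne_one_of_pos_of_lt (Nat.one_le_iff_ne_zero.mp hk.1) (by omega)
      rw [geom_sum_eq hne, ← pow_mul, mul_comm, pow_mul, hζ1, one_pow]
      simp
    calc ∑ j ∈ range n, Q.eval (ω * ζ ^ j)
        = ∑ j ∈ range n, ∑ k ∈ Icc 1 (n - 1), c k * ω ^ k * (ζ ^ k) ^ j := by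
          refine Finset.sum_congr rfl fun j hj => ?_
          rw [hQ]
          simp only [eval_add, eval_pow, eval_X, eval_C, eval_finset_sum, eval_mul,
            h1 j hj]
          have hck : ∀ k ∈ Icc 1 (n - 1), c k * (ω * ζ ^ j) ^ k
              = c k * ω ^ k * (ζ ^ k) ^ j := by
            intro k _
            rw [mul_pow, ← pow_mul, mul_comm j k, pow_mul]; ring
          rw [Finset.sum_congr rfl hck]; ring
      _ = ∑ k ∈ Icc 1 (n - 1), c k * ω ^ k * ∑ j ∈ range n, (ζ ^ k) ^ j := by
          rw [Finset.sum_comm]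
          exact Finset.sum_congr rfl fun k _ => by rw [Finset.mul_sum]
      _ = 0 := by
          refine Finset.sum_eq_zero fun k hk => ?_
          rw [h2 k hk, mul_zero]
  -- real parts
  have hre : ∑ j ∈ range n, (Q.eval (ω * ζ ^ j)).re = 0 := by
    rw [← Complex.re_sum, hsum, Complex.zero_re]
  have hnonneg : ∀ j ∈ range n, 0 ≤ (Q.eval (ω * ζ ^ j)).re := by
    intro j _
    refine hbd _ ?_
    rw [norm_mul, hωnorm, norm_pow, hζ.norm'_eq_one (by omega), one_pow, one_mul]
  have hzero := (Finset.sum_eq_zero_iff_of_nonneg hnonneg).mp hre 0 (by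
    simp; omega)
  simpa using hzero
end

section
/- Let n ≥ 2 and let P(z) = z + a₂z² + ⋯ + a_{n-1}z^{n-1} + zⁿ/n be a complex polynomial (with a₂, …, a_{n-1} ∈ ℂ). Then Re P′(z) > 0 for all z in the open unit disk 𝔻 if and only if a₂ = a₃ = ⋯ = a_{n-1} = 0. -/
open Polynomial Finset

noncomputable def fC (m : ℕ) (c : ℕ → ℂ) (z : ℂ) : ℂ := ∑ k ∈ Finset.range (m+1), c k * z ^ k

-- boundary nonnegativity
lemma bdry (m : ℕ) (c : ℕ → ℂ)
    (h : ∀ z : ℂ, ‖z‖ < 1 → 0 < (fC m c z).re) (z : ℂ) (hz : ‖z‖ = 1) :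
    0 ≤ (fC m c z).re := by
  have hcont : Continuous (fun r : ℝ => (fC m c ((r:ℂ) * z)).re) := by
    unfold fC; continuity
  have htend : Filter.Tendsto (fun r : ℝ => (fC m c ((r:ℂ) * z)).re) (nhdsWithin 1 (Set.Iio 1))
      (nhds (fC m c z).re) := by
    have := hcont.continuousAt (x := (1:ℝ))
    have h2 := this.continuousWithinAt (s := Set.Iio 1)
    simpa using h2.tendsto
  refine ge_of_tendsto htend ?_
  filter_upwards [Ioo_mem_nhdsLT_of_mem (by norm_num : (1:ℝ) ∈ Set.Ioc (-1) 1)] with r hr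
  refine (h _ ?_).le
  have : ‖(r:ℂ)‖ < 1 := by simp [Complex.norm_real, abs_lt]; constructor <;> [exact hr.1; exact hr.2]
  calc ‖(r:ℂ) * z‖ = ‖(r:ℂ)‖ * ‖z‖ := norm_mul _ _
    _ < 1 := by rw [hz, mul_one]; exact this

noncomputable def om (m : ℕ) (j : ℕ) : ℂ :=
  Complex.exp ((Real.pi * (2*j+1) / m : ℝ) * Complex.I)

lemma om_abs (m : ℕ) (j : ℕ) : ‖om m j‖ = 1 := by
  simp only [om]
  exact Complex.norm_exp_ofReal_mul_I _

lemma om_pow_m (m : ℕ) (hm : 1 ≤ m) (j : ℕ) : om m j ^ m = -1 := by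
  have hm0 : (m:ℂ) ≠ 0 := Nat.cast_ne_zero.mpr (by omega)
  rw [om, ← Complex.exp_nat_mul]
  have : (m:ℂ) * ((Real.pi * (2*j+1) / m : ℝ) * Complex.I)
      = (Real.pi : ℂ) * Complex.I + (j:ℤ) * (2 * (Real.pi:ℂ) * Complex.I) := by
    push_cast
    field_simp
    ring
  rw [this, Complex.exp_add, Complex.exp_pi_mul_I, Complex.exp_int_mul_two_pi_mul_I]
  ring

lemma om_ne_zero (m : ℕ) (j : ℕ) : om m j ≠ 0 := Complex.exp_ne_zero _

lemma geom_zero (m : ℕ) (k : ℕ) (h1 : 1 ≤ k) (h2 : k ≤ m - 1) :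
    ∑ j ∈ Finset.range m, (Complex.exp ((2*Real.pi*k/m : ℝ) * Complex.I)) ^ j = 0 := by
  have hm : 1 ≤ m := by omega
  have hm0 : (m:ℂ) ≠ 0 := Nat.cast_ne_zero.mpr (by omega)
  set r : ℂ := Complex.exp ((2*Real.pi*k/m : ℝ) * Complex.I) with hr
  have hrm : r ^ m = 1 := by
    rw [hr, ← Complex.exp_nat_mul]
    have : (m:ℂ) * ((2*Real.pi*k/m : ℝ) * Complex.I) = (k:ℤ) * (2 * (Real.pi:ℂ) * Complex.I) := by
      push_cast; field_simp
    rw [this, Complex.exp_int_mul_two_pi_mul_I]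
  have hr1 : r ≠ 1 := by
    intro h
    obtain ⟨t, ht⟩ := Complex.exp_eq_one_iff.mp h
    have him : (2*Real.pi*k/m : ℝ) = t * (2*Real.pi) := by
      have := congrArg Complex.im ht
      simpa using this
    have hπ : (0:ℝ) < Real.pi := Real.pi_pos
    have hk : (k:ℝ) = t * m := by
      have hmR : (0:ℝ) < (m:ℝ) := by exact_mod_cast hm
      field_simp at him
      nlinarith [him]
    have hkz : (k:ℤ) = t * m := by exact_mod_cast hk
    rcases le_or_gt t 0 with h'|h'
    · nlinarith [hkz, (by exact_mod_cast h1 : (1:ℤ) ≤ (k:ℤ)), (by exact_mod_cast hm : (1:ℤ) ≤ (m:ℤ))]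
    · have : (1:ℤ) ≤ t := h'
      have hkm : (k:ℤ) ≤ (m:ℤ) - 1 := by
        have : k ≤ m - 1 := h2; omega
      nlinarith
  rw [geom_sum_eq hr1, hrm]
  simp

lemma om_pow_eq (m : ℕ) (hm : 1 ≤ m) (j k : ℕ) :
    om m j ^ k = Complex.exp ((Real.pi * k / m : ℝ) * Complex.I) *
      (Complex.exp ((2*Real.pi*k/m : ℝ) * Complex.I)) ^ j := by
  rw [om, ← Complex.exp_nat_mul, ← Complex.exp_nat_mul, ← Complex.exp_add]
  congr 1
  push_cast
  field_simp
  ring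

lemma sumroots (m : ℕ) (hm : 1 ≤ m) (c : ℕ → ℂ) (h0 : c 0 = 1) (hcm : c m = 1) :
    ∑ j ∈ Finset.range m, fC m c (om m j) = 0 := by
  unfold fC
  rw [Finset.sum_comm]
  have : ∀ k ∈ Finset.range (m+1), ∑ j ∈ Finset.range m, c k * om m j ^ k
      = if k = 0 then (m:ℂ) else if k = m then -(m:ℂ) else 0 := by
    intro k hk
    rcases eq_or_ne k 0 with rfl|hk0
    · simp [h0]
    rcases eq_or_ne k m with hkm|hkm
    · rw [hkm]
      simp only [if_neg (by omega : m ≠ 0), if_pos rfl]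
      rw [← Finset.mul_sum]
      have : ∀ j ∈ Finset.range m, om m j ^ m = -1 := fun j _ => om_pow_m m hm j
      rw [Finset.sum_congr rfl this]
      simp [hcm]
    · simp only [if_neg hk0, if_neg hkm]
      rw [← Finset.mul_sum]
      have hsum : ∑ j ∈ Finset.range m, om m j ^ k = 0 := by
        have : ∀ j ∈ Finset.range m, om m j ^ k
            = Complex.exp ((Real.pi * k / m : ℝ) * Complex.I) *
              (Complex.exp ((2*Real.pi*k/m : ℝ) * Complex.I)) ^ j :=
          fun j _ => om_pow_eq m hm j k
        rw [Finset.sum_congr rfl this, ← Finset.mul_sum,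
          geom_zero m k (by omega) (by simp at hk; omega), mul_zero]
      rw [hsum, mul_zero]
  rw [Finset.sum_congr rfl this]
  rw [Finset.sum_range_succ]
  have h1 : ∀ x ∈ Finset.range m,
      (if x = 0 then (m:ℂ) else if x = m then -(m:ℂ) else 0) = if x = 0 then (m:ℂ) else 0 := by
    intro x hx
    simp only [Finset.mem_range] at hx
    by_cases h : x = 0
    · simp [h]
    · simp only [if_neg h, if_neg (by omega : x ≠ m)]
  rw [Finset.sum_congr rfl h1, Finset.sum_ite_eq' (Finset.range m) 0 (fun _ => (m:ℂ))]
  rw [if_neg (by omega : m ≠ 0)]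
  simp [Finset.mem_range, (by omega : 0 < m)]

lemma imA (m : ℕ) (c : ℕ → ℂ) (θ : ℝ)
    (hnn : ∀ ψ : ℝ, 0 ≤ (fC m c (Complex.exp ((ψ:ℝ) * Complex.I))).re)
    (h0 : (fC m c (Complex.exp ((θ:ℝ) * Complex.I))).re = 0) :
    (∑ k ∈ Finset.range (m+1), (k:ℂ) * c k * Complex.exp ((θ:ℝ) * Complex.I) ^ k).im = 0 := by
  set e : ℂ → ℂ := fun w => ∑ k ∈ Finset.range (m+1), c k * Complex.exp (w * ((k:ℂ) * Complex.I))
    with he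
  have hderiv : HasDerivAt e
      (∑ k ∈ Finset.range (m+1),
        c k * (Complex.exp ((θ:ℂ) * ((k:ℂ) * Complex.I)) * ((k:ℂ) * Complex.I))) (θ:ℂ) := by
    apply HasDerivAt.fun_sum
    intro k _
    have := (((Complex.hasDerivAt_exp ((θ:ℂ) * ((k:ℂ) * Complex.I))).comp (θ:ℂ)
      ((hasDerivAt_id (θ:ℂ)).mul_const ((k:ℂ) * Complex.I)))).const_mul (c k)
    simpa [Function.comp] using this
  have hu : (fun x : ℝ => (e x).re) = fun ψ : ℝ => (fC m c (Complex.exp ((ψ:ℝ) * Complex.I))).re := by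
    funext ψ
    simp only [he, fC]
    congr 1
    refine Finset.sum_congr rfl fun k _ => ?_
    rw [← Complex.exp_nat_mul]
    ring_nf
  have hre : HasDerivAt (fun x : ℝ => (e x).re)
      ((∑ k ∈ Finset.range (m+1),
        c k * (Complex.exp ((θ:ℂ) * ((k:ℂ) * Complex.I)) * ((k:ℂ) * Complex.I))).re) θ :=
    hderiv.real_of_complex
  have hmin : IsLocalMin (fun x : ℝ => (e x).re) θ := by
    apply Filter.Eventually.of_forall
    intro x
    rw [hu]
    dsimp only
    rw [h0]
    exact hnn x
  have hz := hmin.deriv_eq_zero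
  rw [hre.deriv] at hz
  have key : (∑ k ∈ Finset.range (m+1),
      c k * (Complex.exp ((θ:ℂ) * ((k:ℂ) * Complex.I)) * ((k:ℂ) * Complex.I)))
      = Complex.I * ∑ k ∈ Finset.range (m+1), (k:ℂ) * c k * Complex.exp ((θ:ℝ) * Complex.I) ^ k := by
    rw [Finset.mul_sum]
    refine Finset.sum_congr rfl fun k _ => ?_
    rw [← Complex.exp_nat_mul]
    ring_nf
  rw [key] at hz
  simpa [Complex.mul_re] using hz

lemma sq_dvd_of_double_root_s2 (p : Polynomial ℂ) (x : ℂ) (h1 : p.eval x = 0)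
    (h2 : (derivative p).eval x = 0) : (X - C x)^2 ∣ p := by
  obtain ⟨q, hq⟩ := (dvd_iff_isRoot (p := p) (a := x)).mpr h1
  have hd : derivative p = q + (X - C x) * derivative q := by
    rw [hq, derivative_mul, derivative_X_sub_C, one_mul]
  have hqx : q.eval x = 0 := by
    have := congrArg (Polynomial.eval x) hd
    simp [h2] at this
    simpa using this.symm
  obtain ⟨r, hr⟩ := (dvd_iff_isRoot (p := q) (a := x)).mpr hqx
  exact ⟨r, by rw [hq, hr]; ring⟩

lemma om_inj (m : ℕ) (hm : 1 ≤ m) (i j : ℕ) (hi : i < m) (hj : j < m)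
    (h : om m i = om m j) : i = j := by
  obtain ⟨t, ht⟩ := Complex.exp_eq_exp_iff_exists_int.mp h
  have him : (Real.pi * (2*i+1) / m : ℝ) = (Real.pi * (2*j+1) / m : ℝ) + t * (2*Real.pi) := by
    have := congrArg Complex.im ht
    simpa using this
  have hπ : (0:ℝ) < Real.pi := Real.pi_pos
  have hmR : (0:ℝ) < (m:ℝ) := by exact_mod_cast hm
  have hij : (i:ℝ) = (j:ℝ) + t * m := by
    field_simp at him
    nlinarith [him]
  have hijz : (i:ℤ) = (j:ℤ) + t * m := by exact_mod_cast hij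
  have hiz : (i:ℤ) < m := by exact_mod_cast hi
  have hjz : (j:ℤ) < m := by exact_mod_cast hj
  have hmz : (1:ℤ) ≤ m := by exact_mod_cast hm
  have ht0 : t = 0 := by
    rcases lt_trichotomy t 0 with h'|h'|h'
    · nlinarith [hijz, (by positivity : (0:ℤ) ≤ (i:ℤ)), (by positivity : (0:ℤ) ≤ (j:ℤ))]
    · exact h'
    · nlinarith [hijz, (by positivity : (0:ℤ) ≤ (i:ℤ)), (by positivity : (0:ℤ) ≤ (j:ℤ))]
  rw [ht0] at hijz
  simp at hijz
  exact_mod_cast hijz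

lemma conj_sum_eval (m : ℕ) (b : ℕ → ℂ) (ω : ℂ) (hω : (starRingEnd ℂ) ω * ω = 1) :
    ∑ k ∈ Finset.range (m+1), (starRingEnd ℂ) (b k) * ω^(m-k)
      = ω^m * (starRingEnd ℂ) (∑ k ∈ Finset.range (m+1), b k * ω^k) := by
  rw [map_sum, Finset.mul_sum]
  refine Finset.sum_congr rfl fun k hk => ?_
  have hkm : k ≤ m := by simp at hk; omega
  have key : ω^m * ((starRingEnd ℂ) ω)^k = ω^(m-k) := by
    rw [← pow_sub_mul_pow ω hkm, mul_assoc, ← mul_pow, mul_comm ω _, hω, one_pow, mul_one]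
  rw [map_mul, map_pow]
  calc (starRingEnd ℂ) (b k) * ω^(m-k)
      = (starRingEnd ℂ) (b k) * (ω^m * ((starRingEnd ℂ) ω)^k) := by rw [key]
    _ = ω^m * ((starRingEnd ℂ) (b k) * ((starRingEnd ℂ) ω)^k) := by ring

lemma alg (m : ℕ) (hm : 1 ≤ m) (c : ℕ → ℂ) (hcm : c m = 1)
    (hre : ∀ j < m, (fC m c (om m j)).re = 0)
    (him : ∀ j < m, (∑ k ∈ Finset.range (m+1), (k:ℂ) * c k * om m j ^ k).im = 0) :
    ∀ k, 1 ≤ k → k ≤ m - 1 → c k = 0 := by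
  set G : Polynomial ℂ := (∑ k ∈ Finset.range (m+1), C (c k) * X^(k+m))
      + (∑ k ∈ Finset.range (m+1), C ((starRingEnd ℂ) (c k)) * X^(m-k)) with hG
  set D : Polynomial ℂ := G - (X^m + 1)^2 with hD
  -- basic facts about ω j
  have hωu : ∀ j < m, (starRingEnd ℂ) (om m j) * om m j = 1 := by
    intro j _
    have h := om_abs m j
    rw [mul_comm, Complex.mul_conj, Complex.normSq_eq_norm_sq, h]
    norm_num
  -- evaluation of G
  have hGeval : ∀ j < m, G.eval (om m j) = 0 := by
    intro j hj
    set ω := om m j with hw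
    have h1 : (∑ k ∈ Finset.range (m+1), C (c k) * X^(k+m)).eval ω
        = ω^m * fC m c ω := by
      rw [eval_finset_sum, fC, Finset.mul_sum]
      refine Finset.sum_congr rfl fun k _ => ?_
      simp [pow_add]; ring
    have h2 : (∑ k ∈ Finset.range (m+1), C ((starRingEnd ℂ) (c k)) * X^(m-k)).eval ω
        = ω^m * (starRingEnd ℂ) (fC m c ω) := by
      rw [eval_finset_sum]
      have h' := conj_sum_eval m c ω (hωu j hj)
      simp only [fC]
      rw [← h']
      refine Finset.sum_congr rfl fun k _ => by simp
    rw [hG, eval_add, h1, h2, ← mul_add, Complex.add_conj, hre j hj]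
    simp
  have hDeval : ∀ j < m, D.eval (om m j) = 0 := by
    intro j hj
    rw [hD, eval_sub, hGeval j hj, eval_pow, eval_add, eval_pow, eval_X, eval_one,
      om_pow_m m hm j]
    simp
  -- evaluation of derivative of G
  have hG'eval : ∀ j < m, (derivative G).eval (om m j) = 0 := by
    intro j hj
    set ω := om m j with hw
    have hω0 : ω ≠ 0 := om_ne_zero m j
    suffices h : ω * (derivative G).eval ω = 0 by
      rcases mul_eq_zero.mp h with h|h
      · exact absurd h hω0
      · exact h
    have hder : derivative G = (∑ k ∈ Finset.range (m+1), C (c k * (k+m : ℕ)) * X^(k+m-1))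
        + (∑ k ∈ Finset.range (m+1), C ((starRingEnd ℂ) (c k) * (m-k : ℕ)) * X^(m-k-1)) := by
      rw [hG, derivative_add, derivative_sum, derivative_sum]
      congr 1 <;> exact Finset.sum_congr rfl fun k _ => by rw [derivative_C_mul_X_pow]
    have hA1 : ω * (∑ k ∈ Finset.range (m+1), C (c k * (k+m : ℕ)) * X^(k+m-1)).eval ω
        = ω^m * ((m : ℂ) * fC m c ω + ∑ k ∈ Finset.range (m+1), (k:ℂ) * c k * ω^k) := by
      rw [eval_finset_sum, Finset.mul_sum]
      have step : ∀ k ∈ Finset.range (m+1),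
          ω * (C (c k * (k+m : ℕ)) * X^(k+m-1)).eval ω = c k * ((k:ℂ)+m) * ω^(k+m) := by
        intro k _
        have h1 : k + m - 1 + 1 = k + m := by omega
        simp only [eval_mul, eval_C, eval_pow, eval_X]
        push_cast
        calc ω * (c k * ((k:ℂ)+m) * ω^(k+m-1)) = c k * ((k:ℂ)+m) * (ω^(k+m-1) * ω) := by ring
          _ = c k * ((k:ℂ)+m) * ω^(k+m) := by rw [← pow_succ, h1]
      rw [Finset.sum_congr rfl step]
      simp only [fC, Finset.mul_sum, ← Finset.sum_add_distrib]
      refine Finset.sum_congr rfl fun k _ => ?_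
      rw [pow_add]
      ring
    have hA2 : ω * (∑ k ∈ Finset.range (m+1), C ((starRingEnd ℂ) (c k) * (m-k : ℕ)) * X^(m-k-1)).eval ω
        = ω^m * ((m : ℂ) * (starRingEnd ℂ) (fC m c ω)
            - (starRingEnd ℂ) (∑ k ∈ Finset.range (m+1), (k:ℂ) * c k * ω^k)) := by
      rw [eval_finset_sum, Finset.mul_sum]
      have step : ∀ k ∈ Finset.range (m+1),
          ω * (C ((starRingEnd ℂ) (c k) * (m-k : ℕ)) * X^(m-k-1)).eval ω
          = (starRingEnd ℂ) ((m : ℂ) * c k) * ω^(m-k) - (starRingEnd ℂ) ((k:ℂ) * c k) * ω^(m-k) := by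
        intro k hk
        have hkm : k ≤ m := by simp at hk; omega
        simp only [eval_mul, eval_C, eval_pow, eval_X, map_mul, Complex.conj_natCast]
        rcases eq_or_ne k m with rfl|hkm'
        · simp
        · have h1 : m - k - 1 + 1 = m - k := by omega
          have h2 : ((m - k : ℕ) : ℂ) = (m:ℂ) - (k:ℂ) := by
            push_cast [Nat.cast_sub hkm]; ring
          calc ω * ((starRingEnd ℂ) (c k) * ((m-k : ℕ):ℂ) * ω^(m-k-1))
              = (starRingEnd ℂ) (c k) * ((m-k : ℕ):ℂ) * (ω^(m-k-1) * ω) := by ring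
            _ = (starRingEnd ℂ) (c k) * (((m:ℂ)-(k:ℂ))) * ω^(m-k) := by
                rw [← pow_succ, h1, h2]
            _ = _ := by ring
      rw [Finset.sum_congr rfl step, Finset.sum_sub_distrib]
      have e1 : ∑ k ∈ Finset.range (m+1), (starRingEnd ℂ) ((m : ℂ) * c k) * ω^(m-k)
          = ω^m * (starRingEnd ℂ) ((m:ℂ) * fC m c ω) := by
        have h' := conj_sum_eval m (fun k => (m:ℂ) * c k) ω (hωu j hj)
        have h'' : ∑ k ∈ Finset.range (m+1), ((m:ℂ) * c k) * ω^k = (m:ℂ) * fC m c ω := by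
          simp only [fC, Finset.mul_sum]
          exact Finset.sum_congr rfl fun k _ => by ring
        rw [h', h'']
      have e2 : ∑ k ∈ Finset.range (m+1), (starRingEnd ℂ) ((k:ℂ) * c k) * ω^(m-k)
          = ω^m * (starRingEnd ℂ) (∑ k ∈ Finset.range (m+1), (k:ℂ) * c k * ω^k) := by
        exact conj_sum_eval m (fun k => (k:ℂ) * c k) ω (hωu j hj)
      rw [e1, e2, map_mul, Complex.conj_natCast]
      ring
    rw [hder, eval_add, mul_add, hA1, hA2]
    have hfre := hre j hj
    have hAim := him j hj
    have hsum : fC m c ω + (starRingEnd ℂ) (fC m c ω) = 0 := by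
      rw [Complex.add_conj, hfre]
      simp
    have hdiff : (∑ k ∈ Finset.range (m+1), (k:ℂ) * c k * ω^k)
        - (starRingEnd ℂ) (∑ k ∈ Finset.range (m+1), (k:ℂ) * c k * ω^k) = 0 := by
      rw [Complex.sub_conj, hAim]
      simp
    have : (m : ℂ) * fC m c ω + (∑ k ∈ Finset.range (m+1), (k:ℂ) * c k * ω^k)
        + ((m : ℂ) * (starRingEnd ℂ) (fC m c ω)
          - (starRingEnd ℂ) (∑ k ∈ Finset.range (m+1), (k:ℂ) * c k * ω^k)) = 0 := by
      have := congrArg (fun z => (m:ℂ) * z) hsum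
      simp only [mul_add, mul_zero] at this
      linear_combination this + hdiff
    linear_combination (ω^m) * this
  have hD'eval : ∀ j < m, (derivative D).eval (om m j) = 0 := by
    intro j hj
    rw [hD, derivative_sub, eval_sub, hG'eval j hj, derivative_pow]
    simp only [eval_mul, eval_pow, eval_add, eval_X, eval_one, om_pow_m m hm j]
    norm_num
  -- the product of double factors divides D
  have hprod : (∏ j ∈ Finset.range m, (X - C (om m j))^2) ∣ D := by
    apply Finset.prod_dvd_of_coprime
    · intro i hi j' hj' hij
      simp only [Finset.mem_coe, Finset.mem_range] at hi hj'
      have hne : om m i ≠ om m j' := fun h => hij (om_inj m hm i j' hi hj' h)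
      have hcop : IsCoprime (X - C (om m i)) (X - C (om m j')) :=
        Polynomial.isCoprime_X_sub_C_of_isUnit_sub ((sub_ne_zero.mpr hne).isUnit)
      exact hcop.pow
    · intro j hj
      simp only [Finset.mem_range] at hj
      exact sq_dvd_of_double_root_s2 D (om m j) (hDeval j hj) (hD'eval j hj)
  have hdegprod : (∏ j ∈ Finset.range m, (X - C (om m j))^2).natDegree = 2*m := by
    rw [Polynomial.natDegree_prod]
    · simp only [Polynomial.natDegree_pow, Polynomial.natDegree_X_sub_C,
        Finset.sum_const, Finset.card_range, smul_eq_mul, mul_one]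
      ring
    · intro j _
      exact pow_ne_zero 2 (Polynomial.X_sub_C_ne_zero (om m j))
  have hsq : ((X:Polynomial ℂ)^m + 1)^2 = X^(2*m) + C 2 * X^m + C 1 := by
    have : ((X:Polynomial ℂ)^m)^2 = X^(2*m) := by rw [← pow_mul]; ring_nf
    rw [← this]
    simp only [map_ofNat, map_one]
    ring
  have hGcoeff : ∀ N, m < N → G.coeff N = if N ≤ 2*m then c (N - m) else 0 := by
    intro N hN
    rw [hG, Polynomial.coeff_add, Polynomial.finset_sum_coeff, Polynomial.finset_sum_coeff]
    have t2 : ∀ k ∈ Finset.range (m+1), (C ((starRingEnd ℂ) (c k)) * X^(m-k)).coeff N = 0 := by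
      intro k hk
      rw [Polynomial.coeff_C_mul, Polynomial.coeff_X_pow, if_neg (by omega : ¬ N = m - k), mul_zero]
    rw [Finset.sum_congr rfl t2, Finset.sum_const, smul_zero, add_zero]
    by_cases hN2 : N ≤ 2*m
    · have t1 : ∀ k ∈ Finset.range (m+1), (C (c k) * X^(k+m)).coeff N
          = if k = N - m then c k else 0 := by
        intro k hk
        simp only [Finset.mem_range] at hk
        rw [Polynomial.coeff_C_mul, Polynomial.coeff_X_pow]
        by_cases h : N = k + m
        · rw [if_pos h, if_pos (by omega), mul_one]
        · rw [if_neg h, if_neg (by omega), mul_zero]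
      rw [Finset.sum_congr rfl t1, Finset.sum_ite_eq' (Finset.range (m+1)) (N-m) c,
        if_pos (by simp only [Finset.mem_range]; omega), if_pos hN2]
    · have t1 : ∀ k ∈ Finset.range (m+1), (C (c k) * X^(k+m)).coeff N = 0 := by
        intro k hk
        simp only [Finset.mem_range] at hk
        rw [Polynomial.coeff_C_mul, Polynomial.coeff_X_pow, if_neg (by omega), mul_zero]
      rw [Finset.sum_congr rfl t1, Finset.sum_const, smul_zero, if_neg hN2]
  have hScoeff : ∀ N, m < N → (((X:Polynomial ℂ)^m + 1)^2).coeff N = if N = 2*m then 1 else 0 := by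
    intro N hN
    rw [hsq, Polynomial.coeff_add, Polynomial.coeff_add, Polynomial.coeff_X_pow,
      Polynomial.coeff_C_mul, Polynomial.coeff_X_pow, Polynomial.coeff_C,
      if_neg (by omega : ¬ N = m), if_neg (by omega : ¬ N = 0), mul_zero, add_zero, add_zero]
  have hdegD : D.natDegree < 2*m := by
    have h1 : D.natDegree ≤ 2*m - 1 := by
      rw [Polynomial.natDegree_le_iff_coeff_eq_zero]
      intro N hN
      have hNm : m < N := by omega
      rw [hD, Polynomial.coeff_sub, hGcoeff N hNm, hScoeff N hNm]
      by_cases h : N = 2*m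
      · rw [if_pos h, if_pos (by omega), h]
        simp only [show 2*m - m = m by omega, hcm, sub_self]
      · rw [if_neg h, if_neg (by omega), sub_zero]
    omega
  have hD0 : D = 0 :=
    Polynomial.eq_zero_of_dvd_of_natDegree_lt hprod (by rw [hdegprod]; exact hdegD)
  intro k hk1 hk2
  have hcoeff := congrArg (fun p : Polynomial ℂ => p.coeff (m + k)) hD0
  simp only [Polynomial.coeff_zero, hD, Polynomial.coeff_sub] at hcoeff
  rw [hGcoeff (m+k) (by omega), hScoeff (m+k) (by omega), if_pos (by omega : m + k ≤ 2*m),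
    if_neg (by omega : ¬ m + k = 2*m), show m + k - m = k by omega, sub_zero] at hcoeff
  exact hcoeff

lemma expand (m : ℕ) (hm : 1 ≤ m) (c : ℕ → ℂ) (b : ℕ → ℂ)
    (h0 : c 0 = 1) (hcm : c m = 1)
    (hmid : ∀ k, 1 ≤ k → k ≤ m-1 → c k = ((k:ℂ)+1) * b (k+1)) (z : ℂ) :
    fC m c z = 1 + (∑ k ∈ Finset.Icc 2 m, b k * k * z^(k-1)) + z^m := by
  have h1 : fC m c z = c 0 * z^0 + ((∑ k ∈ Finset.Ico 1 m, c k * z^k) + c m * z^m) := by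
    rw [fC, Finset.range_eq_Ico, Finset.sum_eq_sum_Ico_succ_bot (by omega : 0 < m+1)]
    congr 1
    rw [Finset.sum_Ico_succ_top (by omega : 1 ≤ m)]
  have h2 : ∑ k ∈ Finset.Icc 2 m, b k * k * z^(k-1) = ∑ k ∈ Finset.Ico 1 m, c k * z^k := by
    refine Finset.sum_bij' (fun k _ => k - 1) (fun k _ => k + 1) ?_ ?_ ?_ ?_ ?_
    · intro k hk
      simp only [Finset.mem_Icc] at hk
      simp only [Finset.mem_Ico]
      omega
    · intro k hk
      simp only [Finset.mem_Ico] at hk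
      simp only [Finset.mem_Icc]
      omega
    · intro k hk
      simp only [Finset.mem_Icc] at hk
      omega
    · intro k hk
      simp only [Finset.mem_Ico] at hk
      omega
    · intro k hk
      simp only [Finset.mem_Icc] at hk
      rw [hmid (k-1) (by omega) (by omega)]
      have : (k - 1 : ℕ) + 1 = k := by omega
      rw [this]
      have hcast : ((k-1 : ℕ):ℂ) + 1 = (k:ℂ) := by
        have : ((k-1 : ℕ):ℂ) = (k:ℂ) - 1 := by
          push_cast [Nat.cast_sub (by omega : 1 ≤ k)]; ring
        rw [this]; ring
      rw [hcast]
      ring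
  rw [h1, h2, h0, hcm]
  ring

/-- For `P(z) = z + a₂ z² + ⋯ + a_{n-1} z^{n-1} + zⁿ/n`, the derivative `P′` has positive
real part on the open unit disk iff all the middle coefficients vanish. -/
theorem deriv_pos_re_iff_middle_coeffs_vanish (n : ℕ) (hn : 2 ≤ n) (a : ℕ → ℂ)
    (P : Polynomial ℂ)
    (hP : P = X + (∑ k ∈ Finset.Icc 2 (n - 1), C (a k) * X ^ k) + C ((n : ℂ)⁻¹) * X ^ n) :
    (∀ z : ℂ, ‖z‖ < 1 → 0 < ((Polynomial.derivative P).eval z).re) ↔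
      (∀ k ∈ Finset.Icc 2 (n - 1), a k = 0) := by
  set m : ℕ := n - 1 with hmdef
  have hm : 1 ≤ m := by omega
  have hn0 : (n:ℂ) ≠ 0 := Nat.cast_ne_zero.mpr (by omega)
  set c : ℕ → ℂ := fun k => if k = 0 then 1 else if k = m then 1 else ((k:ℂ)+1) * a (k+1)
    with hcdef
  have hc0 : c 0 = 1 := by simp [hcdef]
  have hcm : c m = 1 := by simp [hcdef, (by omega : m ≠ 0)]
  have hmid : ∀ k, 1 ≤ k → k ≤ m-1 → c k = ((k:ℂ)+1) * a (k+1) := by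
    intro k h1 h2
    show (if k = 0 then 1 else if k = m then 1 else ((k:ℂ)+1) * a (k+1)) = ((k:ℂ)+1) * a (k+1)
    rw [if_neg (by omega : ¬ k = 0), if_neg (by omega : ¬ k = m)]
  have heval : ∀ z : ℂ, (Polynomial.derivative P).eval z = fC m c z := by
    intro z
    have hder : Polynomial.derivative P
        = 1 + (∑ k ∈ Finset.Icc 2 (n-1), C (a k * (k:ℂ)) * X^(k-1))
          + C ((n:ℂ)⁻¹ * (n:ℂ)) * X^(n-1) := by
      rw [hP]
      simp only [derivative_add, derivative_sum, derivative_C_mul_X_pow, derivative_X]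
      rfl
    rw [hder]
    simp only [eval_add, eval_one, eval_finset_sum, eval_mul, eval_C, eval_pow, eval_X]
    rw [inv_mul_cancel₀ hn0, one_mul]
    rw [expand m hm c a hc0 hcm hmid z]
  constructor
  · intro hpos
    have hpos' : ∀ z : ℂ, ‖z‖ < 1 → 0 < (fC m c z).re := by
      intro z hz; rw [← heval]; exact hpos z hz
    have hb : ∀ z : ℂ, ‖z‖ = 1 → 0 ≤ (fC m c z).re := bdry m c hpos'
    have hbexp : ∀ ψ : ℝ, 0 ≤ (fC m c (Complex.exp ((ψ:ℝ) * Complex.I))).re := by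
      intro ψ
      refine hb _ ?_
      exact Complex.norm_exp_ofReal_mul_I ψ
    have hsum0 : ∑ j ∈ Finset.range m, (fC m c (om m j)).re = 0 := by
      rw [← Complex.re_sum, sumroots m hm c hc0 hcm, Complex.zero_re]
    have hre : ∀ j < m, (fC m c (om m j)).re = 0 := by
      intro j hj
      have := (Finset.sum_eq_zero_iff_of_nonneg
        (fun j _ => hb (om m j) (om_abs m j))).mp hsum0
      exact this j (Finset.mem_range.mpr hj)
    have him : ∀ j < m, (∑ k ∈ Finset.range (m+1), (k:ℂ) * c k * om m j ^ k).im = 0 := by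
      intro j hj
      exact imA m c ((Real.pi * (2*j+1) / m : ℝ)) hbexp (hre j hj)
    have hck := alg m hm c hcm hre him
    intro k hk
    simp only [Finset.mem_Icc] at hk
    have hkm : k ≤ m := by omega
    have := hck (k-1) (by omega) (by omega)
    rw [hmid (k-1) (by omega) (by omega)] at this
    have hk1 : (k - 1 : ℕ) + 1 = k := by omega
    rw [hk1] at this
    have hcast : ((k-1 : ℕ):ℂ) + 1 = (k:ℂ) := by
      push_cast [Nat.cast_sub (by omega : 1 ≤ k)]; ring
    rw [hcast] at this
    rcases mul_eq_zero.mp this with h|h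
    · exact absurd h (Nat.cast_ne_zero.mpr (by omega))
    · exact h
  · intro hvanish z hz
    rw [heval, expand m hm c a hc0 hcm hmid z]
    have hz0 : ∀ k ∈ Finset.Icc 2 m, a k * (k:ℂ) * z^(k-1) = 0 := by
      intro k hk
      rw [hvanish k hk]
      ring
    rw [Finset.sum_eq_zero hz0, add_zero]
    have h1 : ‖z^m‖ < 1 := by
      rw [norm_pow]
      have : ‖z‖ < 1 := hz
      exact pow_lt_one₀ (norm_nonneg z) this (by omega)
    have h2 : |(z^m).re| ≤ ‖z^m‖ := Complex.abs_re_le_norm _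
    have h3 : -(1:ℝ) < (z^m).re := by
      have := neg_le_of_abs_le h2
      linarith
    simp only [Complex.add_re, Complex.one_re]
    linarith
end

section
/- Let n ≥ 2 and let P(z) = z + zⁿ/n. Then for every z in the open unit disk 𝔻 with z ≠ 0, one has P(z) ≠ 0 and Re( z·P′(z) / P(z) ) > 0. -/
open Polynomial

/-- For `P(z) = z + zⁿ/n` with `n ≥ 2`, at every nonzero point of the open unit disk we have
`P(z) ≠ 0` and `Re (z P′(z) / P(z)) > 0`. -/
theorem starlike_criterion_for_z_add_zpow (n : ℕ) (hn : 2 ≤ n)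
    (P : Polynomial ℂ) (hP : P = X + C ((n : ℂ)⁻¹) * X ^ n) :
    ∀ z : ℂ, ‖z‖ < 1 → z ≠ 0 →
      P.eval z ≠ 0 ∧ 0 < (z * (Polynomial.derivative P).eval z / P.eval z).re := by
  intro z hz hz0
  have hn0 : (n : ℂ) ≠ 0 := by
    simp only [ne_eq, Nat.cast_eq_zero]; omega
  have hnR : (2 : ℝ) ≤ (n : ℝ) := by exact_mod_cast hn
  set w : ℂ := z ^ (n - 1) with hwdef
  have hw : ‖w‖ < 1 := by
    rw [hwdef, norm_pow]
    exact pow_lt_one₀ (norm_nonneg z) hz (by omega)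
  have hzn : z ^ n = z * w := by
    rw [hwdef, ← pow_succ']
    congr 1
    omega
  have hPe : P.eval z = z * (1 + w / n) := by
    subst hP
    simp only [eval_add, eval_mul, eval_pow, eval_X, eval_C, hzn]
    field_simp
  have hde : (Polynomial.derivative P).eval z = 1 + w := by
    subst hP
    simp only [derivative_add, derivative_X, derivative_mul, derivative_C,
      derivative_X_pow, eval_add, eval_mul, eval_pow, eval_X, eval_C, eval_one,
      zero_mul, zero_add, eval_natCast]
    rw [hwdef]
    field_simp
  have hwn : ‖w / n‖ < 1 := by
    rw [norm_div]
    calc ‖w‖ / ‖(n : ℂ)‖ ≤ ‖w‖ / 1 := by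
          apply div_le_div_of_nonneg_left (norm_nonneg w) one_pos
          · simp only [Complex.norm_natCast]
            exact_mod_cast (by omega : 1 ≤ n)
      _ = ‖w‖ := div_one _
      _ < 1 := hw
  have hd0 : (1 : ℂ) + w / n ≠ 0 := by
    intro h
    have : w / n = -1 := by linear_combination h
    rw [this] at hwn
    simp at hwn
  constructor
  · rw [hPe]
    exact mul_ne_zero hz0 hd0
  · rw [hPe, hde, mul_div_mul_left _ _ hz0, Complex.div_re]
    have hns : 0 < Complex.normSq (1 + w / n) := Complex.normSq_pos.mpr hd0
    have hre : (w / n).re = w.re / n := by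
      simp [Complex.div_re, Complex.normSq_natCast]
      rw [div_eq_div_iff] <;> [skip; positivity; positivity]
      ring
    have him : (w / n).im = w.im / n := by
      simp [Complex.div_im, Complex.normSq_natCast]
      rw [div_eq_div_iff] <;> [skip; positivity; positivity]
      ring
    have hwsq : w.re ^ 2 + w.im ^ 2 < 1 := by
      have h1 := Complex.normSq_apply w
      have h2 : Complex.normSq w < 1 := by
        rw [Complex.normSq_eq_norm_sq]
        nlinarith [norm_nonneg w]
      nlinarith [h1, h2]
    have hnum : 0 < ((1 : ℂ) + w).re * ((1 : ℂ) + w / n).re + ((1 : ℂ) + w).im * ((1 : ℂ) + w / n).im := by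
      simp only [Complex.add_re, Complex.add_im, Complex.one_re, Complex.one_im, hre, him]
      have ha : w.re ^ 2 < 1 := by nlinarith [sq_nonneg w.im]
      have hnpos : (0 : ℝ) < (n : ℝ) := by linarith
      rw [zero_add, zero_add]
      have key : (1 + w.re) * (1 + w.re / n) + w.im * (w.im / n)
          = ((1 + w.re) * ((n : ℝ) + w.re) + w.im * w.im) / n := by
        field_simp
      rw [key]
      apply div_pos _ hnpos
      nlinarith [sq_nonneg w.im, sq_nonneg (1 + w.re)]
    rw [← add_div]
    exact div_pos hnum hns
end

section
/- Let n ≥ 2 and let P(z) = z + zⁿ/n. Then P is injective on the open unit disk 𝔻, and the image P(𝔻) is star-shaped with respect to the origin, i.e., for every w ∈ P(𝔻) and every t ∈ [0,1], the point t·w belongs to P(𝔻). -/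
set_option maxHeartbeats 1000000

open Polynomial Finset Filter Set Metric
open scoped Topology


lemma aux_inj (n : ℕ) (hn : 2 ≤ n) :
    Set.InjOn (fun z : ℂ => z + (n:ℂ)⁻¹ * z ^ n) (Metric.closedBall 0 1) := by
  intro a ha b hb hab
  by_contra hne
  have hsub : a - b ≠ 0 := sub_ne_zero.mpr hne
  have hn0 : (n:ℂ) ≠ 0 := Nat.cast_ne_zero.mpr (by omega)
  have hgeom : (∑ i ∈ range n, a ^ i * b ^ (n - 1 - i)) * (a - b) = a ^ n - b ^ n :=
    geom_sum₂_mul a b n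
  have key : (a - b) * (1 + (n:ℂ)⁻¹ * ∑ i ∈ range n, a ^ i * b ^ (n - 1 - i)) = 0 := by
    have : a + (n:ℂ)⁻¹ * a ^ n = b + (n:ℂ)⁻¹ * b ^ n := hab
    have h2 : (a - b) + (n:ℂ)⁻¹ * (a ^ n - b ^ n) = 0 := by ring_nf; linear_combination this
    rw [← hgeom] at h2
    linear_combination h2
  have hfac : 1 + (n:ℂ)⁻¹ * ∑ i ∈ range n, a ^ i * b ^ (n - 1 - i) = 0 :=
    (mul_eq_zero.mp key).resolve_left hsub
  have hsum : (∑ i ∈ range n, a ^ i * b ^ (n - 1 - i)) = -(n:ℂ) := by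
    field_simp at hfac
    linear_combination hfac
  -- each term has abs ≤ 1
  have habs : ∀ i, ‖a ^ i * b ^ (n - 1 - i)‖ ≤ 1 := by
    intro i
    rw [norm_mul, norm_pow, norm_pow]
    have ha1 : ‖a‖ ≤ 1 := by
      simpa [Complex.dist_eq] using Metric.mem_closedBall.mp ha
    have hb1 : ‖b‖ ≤ 1 := by
      simpa [Complex.dist_eq] using Metric.mem_closedBall.mp hb
    exact mul_le_one₀ (pow_le_one₀ (norm_nonneg _) ha1)
      (pow_nonneg (norm_nonneg _) _) (pow_le_one₀ (norm_nonneg _) hb1)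
  have hre : ∀ i, -1 ≤ (a ^ i * b ^ (n - 1 - i)).re := by
    intro i
    have := Complex.abs_re_le_norm (a ^ i * b ^ (n - 1 - i))
    have h := habs i
    cases abs_le.mp (this.trans h) with
    | intro h1 h2 => exact h1
  -- sum of (1 + re) = 0 with nonneg terms
  have hsum0 : (∑ i ∈ range n, (1 + (a ^ i * b ^ (n - 1 - i)).re)) = 0 := by
    rw [Finset.sum_add_distrib, Finset.sum_const, card_range]
    have : (∑ i ∈ range n, (a ^ i * b ^ (n - 1 - i)).re) = -(n:ℝ) := by
      rw [← Complex.re_sum, hsum]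
      simp
    rw [this]; simp
  have heach : ∀ i ∈ range n, (1 + (a ^ i * b ^ (n - 1 - i)).re) = 0 := by
    have := (Finset.sum_eq_zero_iff_of_nonneg (fun i _ => by linarith [hre i])).mp hsum0
    exact this
  have hterm : ∀ i ∈ range n, a ^ i * b ^ (n - 1 - i) = -1 := by
    intro i hi
    have h1 : (a ^ i * b ^ (n - 1 - i)).re = -1 := by linarith [heach i hi]
    have h2 : ‖a ^ i * b ^ (n - 1 - i)‖ ≤ 1 := habs i
    set T := a ^ i * b ^ (n - 1 - i)
    have him : T.im = 0 := by
      have e1 : Complex.normSq T = T.re ^ 2 + T.im ^ 2 := by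
        rw [Complex.normSq_apply]; ring
      have e2 : ‖T‖ ^ 2 = Complex.normSq T := Complex.sq_norm T
      nlinarith [norm_nonneg T, sq_nonneg T.im]
    apply Complex.ext <;> simp [h1, him]
  have h0 : b ^ (n - 1) = -1 := by
    have := hterm 0 (by simp; omega)
    simpa using this
  have h1 : a * b ^ (n - 2) = -1 := by
    have := hterm 1 (by simp; omega)
    have e : n - 1 - 1 = n - 2 := by omega
    rw [e] at this
    simpa using this
  have hb0 : b ≠ 0 := by
    intro h
    rw [h, zero_pow (by omega : n - 1 ≠ 0)] at h0
    exact absurd h0 (by norm_num)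
  have hbb : b * b ^ (n - 2) = -1 := by
    have : b ^ (n - 1) = b * b ^ (n - 2) := by
      rw [← pow_succ']
      congr 1
      omega
    rw [← this]; exact h0
  have : a = b := by
    have hbpow : b ^ (n - 2) ≠ 0 := pow_ne_zero _ hb0
    have := h1.trans hbb.symm
    exact mul_right_cancel₀ hbpow this
  exact hne this


lemma aux_K (n : ℕ) (hn : 2 ≤ n) (v : ℂ) (hv : ‖v‖ < 1) :
    0 < ((1 + (n:ℂ)⁻¹ * v) / (1 + v)).re := by
  have hnR : (2:ℝ) ≤ (n:ℝ) := by exact_mod_cast hn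
  have hx2 : v.re ^ 2 + v.im ^ 2 < 1 := by
    have := Complex.sq_norm v
    rw [Complex.normSq_apply] at this
    nlinarith [norm_nonneg v]
  have hvne : (1 : ℂ) + v ≠ 0 := by
    intro h
    have : v = -1 := by linear_combination h
    rw [this] at hv; simp at hv
  have hns : 0 < Complex.normSq (1 + v) := Complex.normSq_pos.mpr hvne
  have hcast : ((n:ℂ))⁻¹ = (((n:ℝ)⁻¹ : ℝ) : ℂ) := by
    rw [Complex.ofReal_inv, Complex.ofReal_natCast]
  rw [Complex.div_re, hcast]
  have hre : ((1:ℂ) + (((n:ℝ)⁻¹ : ℝ) : ℂ) * v).re = 1 + (n:ℝ)⁻¹ * v.re := by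
    simp [Complex.add_re, Complex.re_ofReal_mul]
  have him : ((1:ℂ) + (((n:ℝ)⁻¹ : ℝ) : ℂ) * v).im = (n:ℝ)⁻¹ * v.im := by
    simp [Complex.add_im, Complex.im_ofReal_mul]
  rw [hre, him]
  have h1x : ((1:ℂ) + v).re = 1 + v.re := by simp
  have h1y : ((1:ℂ) + v).im = v.im := by simp
  rw [h1x, h1y]
  rw [← add_div]
  apply div_pos _ hns
  have hxgt : -1 < v.re := by nlinarith [sq_nonneg v.im]
  have hnpos : 0 < (n:ℝ)⁻¹ := by positivity
  have hc1 : (n:ℝ)⁻¹ ≤ 1 := by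
    rw [inv_le_one_iff₀]; right; linarith
  have hcx : 0 < 1 + (n:ℝ)⁻¹ * v.re := by nlinarith
  nlinarith [mul_pos (by linarith : (0:ℝ) < 1 + v.re) hcx,
    mul_nonneg hnpos.le (sq_nonneg v.im), sq_nonneg v.im]

/-- For `P(z) = z + zⁿ/n` with `n ≥ 2`, `P` is injective on the open unit disk and its image
there is star-shaped with respect to the origin. -/
theorem z_add_zpow_injective_and_starlike (n : ℕ) (hn : 2 ≤ n)
    (P : Polynomial ℂ) (hP : P = X + C ((n : ℂ)⁻¹) * X ^ n) :
    Set.InjOn (fun z => P.eval z) (Metric.ball (0 : ℂ) 1) ∧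
      ∀ w ∈ (fun z => P.eval z) '' Metric.ball (0 : ℂ) 1, ∀ t : ℝ, t ∈ Set.Icc (0 : ℝ) 1 →
        (t : ℂ) * w ∈ (fun z => P.eval z) '' Metric.ball (0 : ℂ) 1 := by
  have hn0 : (n:ℂ) ≠ 0 := Nat.cast_ne_zero.mpr (by omega)
  have hfeq : (fun z => P.eval z) = (fun z : ℂ => z + (n:ℂ)⁻¹ * z ^ n) := by
    funext x; simp [hP]
  rw [hfeq]
  set f : ℂ → ℂ := fun z : ℂ => z + (n:ℂ)⁻¹ * z ^ n with hf
  -- strict derivative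
  have hderiv : ∀ x : ℂ, HasStrictDerivAt f (1 + x ^ (n-1)) x := by
    intro x
    have h := (hasStrictDerivAt_id x).add
      (((hasStrictDerivAt_pow n x)).const_mul ((n:ℂ)⁻¹))
    have he : (1:ℂ) + (n:ℂ)⁻¹ * ((n:ℂ) * x ^ (n-1)) = 1 + x ^ (n-1) := by
      field_simp
    rw [he] at h
    exact h
  have hne : ∀ x : ℂ, ‖x‖ < 1 → (1:ℂ) + x ^ (n-1) ≠ 0 := by
    intro x hx h
    have hxp : x ^ (n-1) = -1 := by linear_combination h
    have : ‖x ^ (n-1)‖ = 1 := by rw [hxp]; simp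
    rw [norm_pow] at this
    have : ‖x‖ ^ (n-1) < 1 :=
      pow_lt_one₀ (norm_nonneg x) hx (by omega)
    simp_all
  have hfc : Continuous f := by
    exact continuous_id.add (continuous_const.mul (continuous_pow n))
  constructor
  · exact (aux_inj n hn).mono Metric.ball_subset_closedBall
  rintro w ⟨z, hz, rfl⟩ t ⟨ht0, ht1⟩
  have _dummy : True := trivial
  have hzabs : ‖z‖ < 1 := by
    simpa [Complex.dist_eq] using Metric.mem_ball.mp hz
  set ρ : ℝ := (‖z‖ + 1) / 2 with hρ
  have habsz0 : 0 ≤ ‖z‖ := norm_nonneg z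
  have hρ0 : 0 < ρ := by rw [hρ]; linarith
  have hρ1 : ρ < 1 := by rw [hρ]; linarith
  have hzρ : ‖z‖ < ρ := by rw [hρ]; linarith
  have hzmem : z ∈ Metric.ball (0:ℂ) ρ := by
    simpa [Metric.mem_ball, Complex.dist_eq] using hzρ
  -- image of ball ρ is open
  have hSopen : IsOpen (f '' Metric.ball 0 ρ) := by
    rw [isOpen_iff_mem_nhds]
    rintro y ⟨x, hx, rfl⟩
    have hx1 : ‖x‖ < 1 :=
      lt_trans (by simpa [Metric.mem_ball, Complex.dist_eq] using hx) hρ1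
    rw [← (hderiv x).map_nhds_eq (hne x hx1)]
    exact Filter.image_mem_map (Metric.isOpen_ball.mem_nhds hx)
  -- main claim
  have main : ∀ s : ℝ, s ∈ Set.Icc (0:ℝ) 1 → (s:ℂ) * f z ∈ f '' Metric.ball 0 ρ := by
    by_contra hcon
    push_neg at hcon
    obtain ⟨s₀, hs₀, hs₀not⟩ := hcon
    set Bad : Set ℝ :=
      Set.Icc (0:ℝ) 1 ∩ (fun s : ℝ => (s:ℂ) * f z) ⁻¹' (f '' Metric.ball 0 ρ)ᶜ with hBad
    have hLc : Continuous fun s : ℝ => (s:ℂ) * f z :=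
      (Complex.continuous_ofReal).mul continuous_const
    have hBadclosed : IsClosed Bad :=
      isClosed_Icc.inter (hSopen.isClosed_compl.preimage hLc)
    have hBadcompact : IsCompact Bad := isCompact_Icc.inter_right
      (hSopen.isClosed_compl.preimage hLc)
    have hBadne : Bad.Nonempty := ⟨s₀, hs₀, hs₀not⟩
    set σ : ℝ := sSup Bad with hσ
    have hmem : σ ∈ Bad := hBadcompact.sSup_mem hBadne
    obtain ⟨⟨hσ0, hσ1⟩, hσnot⟩ := hmem
    have h1good : (1:ℝ) ∉ Bad := by
      intro h
      exact h.2 ⟨z, hzmem, by simp⟩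
    have hσlt1 : σ < 1 := lt_of_le_of_ne hσ1 (fun h => h1good (h ▸ ⟨⟨hσ0, hσ1⟩, hσnot⟩))
    have hAbove : ∀ s' : ℝ, σ < s' → s' ≤ 1 → (s':ℂ) * f z ∈ f '' Metric.ball 0 ρ := by
      intro s' h hle
      by_contra hno
      have : s' ∈ Bad := ⟨⟨le_trans hσ0 h.le, hle⟩, hno⟩
      have := le_csSup hBadcompact.bddAbove this
      linarith
    -- limit point is in image of closed ball
    have hlim : (σ:ℂ) * f z ∈ f '' Metric.closedBall 0 ρ := by
      have h1 : Set.Ioc σ 1 ⊆ (fun s : ℝ => (s:ℂ) * f z) ⁻¹' (f '' Metric.closedBall 0 ρ) :=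
        fun s' hs' => (Set.image_mono Metric.ball_subset_closedBall)
          (hAbove s' hs'.1 hs'.2)
      have h2 : σ ∈ closure (Set.Ioc σ 1) := by
        rw [closure_Ioc (ne_of_lt hσlt1)]
        exact ⟨le_refl _, le_of_lt hσlt1⟩
      have hcl : IsClosed (f '' Metric.closedBall 0 ρ) :=
        ((isCompact_closedBall _ _).image hfc).isClosed
      have h3 := (hcl.preimage hLc).closure_subset_iff.mpr h1
      exact h3 h2
    obtain ⟨u, humem, hufu⟩ := hlim
    have huρ : ‖u‖ ≤ ρ := by
      simpa [Metric.mem_closedBall, Complex.dist_eq] using humem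
    have hueq : ‖u‖ = ρ := by
      rcases lt_or_eq_of_le huρ with h | h
      · exact absurd ⟨u, by simpa [Metric.mem_ball, Complex.dist_eq] using h, hufu⟩ hσnot
      · exact h
    have hu1 : ‖u‖ < 1 := by rw [hueq]; exact hρ1
    have hu0 : u ≠ 0 := by
      intro h
      rw [h] at hueq; simp at hueq; linarith
    -- factorization f u = u * (1 + n⁻¹ u^(n-1))
    have hfact : f u = u * (1 + (n:ℂ)⁻¹ * u ^ (n-1)) := by
      have hnn : n - 1 + 1 = n := by omega
      have : u ^ n = u * u ^ (n-1) := by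
        conv_lhs => rw [← hnn, pow_succ]
        ring
      simp only [hf]
      rw [this]; ring
    have hfune : f u ≠ 0 := by
      rw [hfact]
      apply mul_ne_zero hu0
      intro h
      have hxp : (n:ℂ)⁻¹ * u ^ (n-1) = -1 := by linear_combination h
      have h1 : ‖(n:ℂ)⁻¹ * u ^ (n-1)‖ = 1 := by rw [hxp]; simp
      have h2 : ‖(n:ℂ)⁻¹ * u ^ (n-1)‖ < 1 := by
        rw [norm_mul, norm_inv, norm_pow]
        have hna : (1:ℝ) ≤ ‖(n:ℂ)‖ := by
          rw [Complex.norm_natCast]; exact_mod_cast by omega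
        have hp : ‖u‖ ^ (n-1) < 1 :=
          pow_lt_one₀ (norm_nonneg u) hu1 (by omega)
        have : ‖((n:ℂ))⁻¹‖ ≤ 1 := by
          rw [norm_inv]; exact inv_le_one_of_one_le₀ hna
        rw [← norm_inv]
        nlinarith [norm_nonneg ((n:ℂ)⁻¹), pow_nonneg (norm_nonneg u) (n-1)]
      linarith [h1, h2]
    have hσpos : 0 < σ := by
      rcases lt_or_eq_of_le hσ0 with h | h
      · exact h
      · exfalso
        apply hfune
        rw [hufu, ← h]
        simp
    -- local inverse setup
    set d : ℂ := 1 + u ^ (n-1) with hd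
    have hd0 : d ≠ 0 := hne u hu1
    have hstrict : HasStrictDerivAt f d u := hderiv u
    set g : ℂ → ℂ := hstrict.localInverse f d u hd0 with hg
    have hF := hstrict.hasStrictFDerivAt_equiv hd0
    have hgu : g (f u) = u := hF.localInverse_apply_image
    have hgc : ContinuousAt g (f u) := hF.localInverse_continuousAt
    have hgr : ∀ᶠ y in 𝓝 (f u), f (g y) = y := hF.eventually_right_inverse
    have hgd : HasStrictDerivAt g d⁻¹ (f u) := hstrict.to_localInverse hd0
    -- the line map
    set L : ℝ → ℂ := fun s : ℝ => (s:ℂ) * f z with hL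
    have hLσ : L σ = f u := hufu.symm
    have hLd : HasDerivAt L (f z) σ := by
      have h1 : HasDerivAt (fun s : ℝ => (s:ℂ)) (Complex.ofRealCLM 1) σ :=
        Complex.ofRealCLM.hasDerivAt
      have h2 := h1.mul_const (f z)
      simpa using h2
    set G : ℝ → ℂ := fun s => g (L s) with hG
    have hGσ : G σ = u := by rw [hG]; simp only [hLσ, hgu]
    set q : ℂ := f z * d⁻¹ with hq
    have hGd : HasDerivAt G q σ := by
      have hgd' : HasDerivAt g d⁻¹ (L σ) := by rw [hLσ]; exact hgd.hasDerivAt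
      have := hgd'.scomp σ hLd
      have h2 : HasDerivAt (g ∘ L) q σ := by simpa [hq, smul_eq_mul, mul_comm] using this
      exact h2
    -- φ and its derivative
    set φ : ℝ → ℝ := fun s => (G s).re ^ 2 + (G s).im ^ 2 with hφdef
    have hre : HasDerivAt (fun s => (G s).re) q.re σ :=
      Complex.reCLM.hasFDerivAt.comp_hasDerivAt σ hGd
    have him : HasDerivAt (fun s => (G s).im) q.im σ :=
      Complex.imCLM.hasFDerivAt.comp_hasDerivAt σ hGd
    set D : ℝ := 2 * u.re * q.re + 2 * u.im * q.im with hD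
    have hφd : HasDerivAt φ D σ := by
      have h1 := (hre.pow 2).add (him.pow 2)
      have e : (2:ℕ) * (G σ).re ^ (2-1) * q.re + (2:ℕ) * (G σ).im ^ (2-1) * q.im = D := by
        rw [hGσ] at *
        push_cast
        rw [hD]; ring
      rw [e] at h1
      exact h1
    -- positivity of D
    have hvabs : ‖u ^ (n-1)‖ < 1 := by
      rw [norm_pow]
      exact pow_lt_one₀ (norm_nonneg u) hu1 (by omega)
    have hfz : f z = (↑σ)⁻¹ * f u := by
      have hσC : (σ:ℂ) ≠ 0 := by
        simp only [ne_eq, Complex.ofReal_eq_zero]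
        linarith
      field_simp
      linear_combination -hufu
    have hDpos : 0 < D := by
      have hqre : u.re * q.re + u.im * q.im = ((starRingEnd ℂ) u * q).re := by
        simp only [Complex.mul_re, Complex.conj_re, Complex.conj_im]
        ring
      have hcalc : (starRingEnd ℂ) u * q
          = ((σ⁻¹ * Complex.normSq u : ℝ) : ℂ) * ((1 + (n:ℂ)⁻¹ * u ^ (n-1)) / d) := by
        rw [hq, hfz, hfact]
        have : (starRingEnd ℂ) u * u = (Complex.normSq u : ℂ) := by
          rw [mul_comm, Complex.mul_conj]
        push_cast
        field_simp
        ring_nf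
        rw [mul_comm ((starRingEnd ℂ) u) u, Complex.mul_conj]
        ring
      have hKpos := aux_K n hn (u ^ (n-1)) hvabs
      have hnspos : 0 < Complex.normSq u := Complex.normSq_pos.mpr hu0
      have hcoef : 0 < σ⁻¹ * Complex.normSq u := mul_pos (inv_pos.mpr hσpos) hnspos
      rw [← hd] at hKpos
      have : 0 < ((starRingEnd ℂ) u * q).re := by
        rw [hcalc, Complex.re_ofReal_mul]
        exact mul_pos hcoef hKpos
      rw [hD]
      nlinarith [hqre, this]
    -- eventual facts on 𝓝[>] σ
    have hslopet : Tendsto (slope φ σ) (𝓝[≠] σ) (𝓝 D) :=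
      hasDerivAt_iff_tendsto_slope.mp hφd
    have hslope' : ∀ᶠ s' in 𝓝[>] σ, 0 < slope φ σ s' :=
      (hslopet.mono_left (nhdsWithin_mono _ (fun x hx => ne_of_gt hx))).eventually
        (lt_mem_nhds hDpos)
    have hIoc : ∀ᶠ s' in 𝓝[>] σ, s' ∈ Set.Ioc σ 1 :=
      Ioc_mem_nhdsGT_of_mem ⟨le_refl σ, hσlt1⟩
    have hLt : Tendsto L (𝓝 σ) (𝓝 (f u)) := by
      rw [← hLσ]; exact hLc.continuousAt
    have hev2 : ∀ᶠ s' in 𝓝 σ, f (g (L s')) = L s' := hLt.eventually hgr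
    have hGc : ContinuousAt G σ :=
      ContinuousAt.comp (by rw [hLσ]; exact hgc) hLc.continuousAt
    have habsG : ∀ᶠ s' in 𝓝 σ, ‖G s'‖ < 1 := by
      have h := (continuous_norm.continuousAt).comp hGc
      have h2 : ‖G σ‖ < 1 := by rw [hGσ]; exact hu1
      exact h.eventually_lt_const h2
    obtain ⟨s', hs'1, hs'2, hs'3, hs'4⟩ :=
      (hslope'.and (hIoc.and ((hev2.and habsG).filter_mono nhdsWithin_le_nhds))).exists
    obtain ⟨u', hu'mem, hu'eq⟩ := hAbove s' hs'2.1 hs'2.2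
    have hu'abs : ‖u'‖ < ρ := by
      simpa [Metric.mem_ball, Complex.dist_eq] using hu'mem
    have hu'cb : u' ∈ Metric.closedBall (0:ℂ) 1 := by
      simp only [Metric.mem_closedBall, Complex.dist_eq, sub_zero]
      linarith
    have hGcb : G s' ∈ Metric.closedBall (0:ℂ) 1 := by
      simp only [Metric.mem_closedBall, Complex.dist_eq, sub_zero]
      exact hs'4.le
    have hfeq2 : f (G s') = f u' := by
      have : f (G s') = L s' := hs'3
      rw [this, hu'eq]
    have hGu' : G s' = u' := aux_inj n hn hGcb hu'cb hfeq2
    have hφs' : φ s' < ρ^2 := by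
      have e1 : φ s' = Complex.normSq u' := by
        rw [hφdef]; simp only [hGu', Complex.normSq_apply]; ring
      rw [e1, ← Complex.sq_norm]
      nlinarith [norm_nonneg u']
    have hφσ : φ σ = ρ^2 := by
      have e1 : φ σ = Complex.normSq u := by
        rw [hφdef]; simp only [hGσ, Complex.normSq_apply]; ring
      rw [e1, ← Complex.sq_norm, hueq]
    rw [slope_def_field] at hs'1
    have hden : 0 < s' - σ := sub_pos.mpr hs'2.1
    have hnum : 0 < φ s' - φ σ := by
      by_contra hle
      push_neg at hle
      have : (φ s' - φ σ) / (s' - σ) ≤ 0 := div_nonpos_of_nonpos_of_nonneg hle hden.le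
      linarith
    linarith
  have := main t ⟨ht0, ht1⟩
  exact (Set.image_mono (Metric.ball_subset_ball hρ1.le)) this
end

section
/- Let P be a nonconstant complex polynomial that is injective on the open unit disk 𝔻, and let α ∈ ℂ with |α| = 1 be such that P′(α) = 0. Then P″(α) ≠ 0; that is, every critical point of P lying on the unit circle is a simple zero of P′. -/
open Polynomial

open Filter Set
open scoped Topology

lemma norm_lt_one_eventually {ψ : ℂ → ℂ} {α d : ℂ} (hψ : HasStrictDerivAt ψ d 0)
    (hψ0 : ψ 0 = α) (hα : ‖α‖ = 1) (c : ℂ)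
    (hc : ((starRingEnd ℂ) α * (c * d)).re < 0) :
    ∀ᶠ t : ℝ in 𝓝[>] (0:ℝ), ‖ψ ((t : ℂ) * c)‖ < 1 := by
  have h0 : ((0:ℝ) : ℂ) * c = 0 := by simp
  have hcurve : HasDerivAt (fun t : ℝ => (t : ℂ) * c) c 0 := by
    simpa using (Complex.ofRealCLM.hasDerivAt (x := (0:ℝ))).mul_const c
  have hz : HasDerivAt (fun t : ℝ => ψ ((t : ℂ) * c)) (c • d) 0 := by
    have hg : HasDerivAt ψ d (((0:ℝ) : ℂ) * c) := by rw [h0]; exact hψ.hasDerivAt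
    exact HasDerivAt.scomp (0:ℝ) hg hcurve
  have hre : HasDerivAt (fun t : ℝ => (ψ ((t : ℂ) * c)).re) ((c • d).re) 0 :=
    Complex.reCLM.hasFDerivAt.comp_hasDerivAt 0 hz
  have him : HasDerivAt (fun t : ℝ => (ψ ((t : ℂ) * c)).im) ((c • d).im) 0 :=
    Complex.imCLM.hasFDerivAt.comp_hasDerivAt 0 hz
  set m : ℝ → ℝ := fun t => (ψ ((t : ℂ) * c)).re * (ψ ((t : ℂ) * c)).re
      + (ψ ((t : ℂ) * c)).im * (ψ ((t : ℂ) * c)).im with hm_def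
  have hm : HasDerivAt m (((c • d).re * α.re + α.re * (c • d).re)
      + ((c • d).im * α.im + α.im * (c • d).im)) 0 := by
    have := (hre.mul hre).add (him.mul him)
    simp only [h0, hψ0] at this
    exact this
  have hM : (((c • d).re * α.re + α.re * (c • d).re)
      + ((c • d).im * α.im + α.im * (c • d).im)) < 0 := by
    have h1 : ((starRingEnd ℂ) α * (c * d)).re
        = α.re * (c * d).re + α.im * (c * d).im := by
      simp [Complex.mul_re, Complex.conj_re, Complex.conj_im]
    have h2 : (c • d) = c * d := smul_eq_mul ..
    rw [h2]
    rw [h1] at hc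
    linarith
  have hslope := hasDerivAt_iff_tendsto_slope.mp hm
  have hneg : ∀ᶠ t in 𝓝[≠] (0:ℝ), slope m 0 t < 0 :=
    hslope.eventually_lt_const hM
  have hmono : (𝓝[>] (0:ℝ)) ≤ 𝓝[≠] (0:ℝ) :=
    nhdsWithin_mono 0 (fun x hx => ne_of_gt hx)
  filter_upwards [hneg.filter_mono hmono, self_mem_nhdsWithin] with t hs ht
  have hts : slope m 0 t = (m t - m 0) / t := by
    rw [slope_def_field]; ring_nf
  rw [hts] at hs
  have ht0 : (0:ℝ) < t := ht
  have hmt : m t < m 0 := by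
    have := (div_neg_iff).mp hs
    rcases this with ⟨h1, h2⟩ | ⟨h1, h2⟩
    · linarith
    · linarith
  have hm0 : m 0 = 1 := by
    have : Complex.normSq α = 1 := by
      have := Complex.normSq_eq_norm_sq α
      rw [this, hα]; norm_num
    simpa [hm_def, h0, hψ0, Complex.normSq_apply] using this
  have hmt1 : m t < 1 := by rw [hm0] at hmt; exact hmt
  have hnsq : ‖ψ ((t : ℂ) * c)‖ ^ 2 < 1 := by
    have : Complex.normSq (ψ ((t : ℂ) * c)) = m t := by
      simp [hm_def, Complex.normSq_apply]
    have h2 : ‖ψ ((t : ℂ) * c)‖ ^ 2 = Complex.normSq (ψ ((t : ℂ) * c)) := by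
      rw [← Complex.sq_norm]
    rw [h2, this]; exact hmt1
  nlinarith [norm_nonneg (ψ ((t : ℂ) * c))]

/-- A critical point of a nonconstant polynomial, injective on the open unit disk,
that lies on the unit circle is a simple zero of the derivative. -/
theorem critical_point_on_circle_is_simple (P : Polynomial ℂ)
    (hdeg : 0 < P.natDegree)
    (hinj : Set.InjOn (fun z => P.eval z) (Metric.ball (0 : ℂ) 1))
    (α : ℂ) (hα : ‖α‖ = 1) (hcrit : (Polynomial.derivative P).eval α = 0) :
    (Polynomial.derivative (Polynomial.derivative P)).eval α ≠ 0 := by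
  intro hcrit2
  set a : ℂ := P.eval α with ha
  set Q : Polynomial ℂ := P - C a with hQdef
  have hQ0 : Q ≠ 0 := by
    intro h
    have hP : P = C a := by rwa [sub_eq_zero] at h
    rw [hP] at hdeg; simp at hdeg
  have hQroot : Q.IsRoot α := by simp [hQdef, IsRoot, ha]
  have hQ' : derivative Q = derivative P := by simp [hQdef]
  have hP'0 : derivative P ≠ 0 := by
    intro h
    have := Polynomial.natDegree_eq_zero_of_derivative_eq_zero h
    omega
  have hP''0 : derivative (derivative P) ≠ 0 := by
    intro h
    have h1 := Polynomial.natDegree_eq_zero_of_derivative_eq_zero h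
    have h2 : derivative P = C ((derivative P).coeff 0) :=
      Polynomial.eq_C_of_natDegree_eq_zero h1
    have h3 : (derivative P).coeff 0 = 0 := by
      have := hcrit
      rw [h2] at this; simpa using this
    exact hP'0 (by rw [h2, h3, map_zero])
  set k : ℕ := Q.rootMultiplicity α with hkdef
  have hk1 : 1 ≤ k := (Polynomial.rootMultiplicity_pos hQ0).mpr hQroot
  have hrm1 : (derivative Q).rootMultiplicity α = k - 1 :=
    Polynomial.derivative_rootMultiplicity_of_root hQroot
  have hQ'root : (derivative Q).IsRoot α := by rw [hQ']; exact hcrit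
  have hk2 : 2 ≤ k := by
    have := (Polynomial.rootMultiplicity_pos (by rw [hQ']; exact hP'0)).mpr hQ'root
    omega
  have hrm2 : (derivative (derivative Q)).rootMultiplicity α
      = k - 2 := by
    rw [Polynomial.derivative_rootMultiplicity_of_root hQ'root, hrm1]
    omega
  have hQ''root : (derivative (derivative Q)).IsRoot α := by
    rw [hQ']; exact hcrit2
  have hk3 : 3 ≤ k := by
    have := (Polynomial.rootMultiplicity_pos
      (by rw [hQ']; exact hP''0)).mpr hQ''root
    omega
  set g : Polynomial ℂ := Q /ₘ (X - C α) ^ k with hgdef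
  have hgQ : (X - C α) ^ k * g = Q :=
    Polynomial.pow_mul_divByMonic_rootMultiplicity_eq Q α
  have hgα : g.eval α ≠ 0 :=
    Polynomial.eval_divByMonic_pow_rootMultiplicity_ne_zero α hQ0
  have heval : ∀ z : ℂ, P.eval z = a + (z - α) ^ k * g.eval z := by
    intro z
    have := congrArg (Polynomial.eval z) hgQ
    simp only [Polynomial.eval_mul, Polynomial.eval_pow, Polynomial.eval_sub,
      Polynomial.eval_X, Polynomial.eval_C, hQdef] at this
    linear_combination -this
  -- k-th root of g near α
  have hkC : (k : ℂ) ≠ 0 := Nat.cast_ne_zero.mpr (by omega)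
  set β : ℂ := Complex.exp ((k : ℂ)⁻¹ * Complex.log (g.eval α)) with hβdef
  have hβ0 : β ≠ 0 := Complex.exp_ne_zero _
  have hβk : β ^ k = g.eval α := by
    rw [hβdef, ← Complex.exp_nat_mul,
      show (k : ℂ) * ((k : ℂ)⁻¹ * Complex.log (g.eval α))
        = Complex.log (g.eval α) by field_simp]
    exact Complex.exp_log hgα
  set F : ℂ → ℂ :=
    fun z => β * Complex.exp ((k : ℂ)⁻¹ * Complex.log (g.eval z / g.eval α)) with hFdef
  have hGα : g.eval α / g.eval α = 1 := div_self hgα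
  have hFα : F α = β := by
    rw [hFdef]; simp only [hGα, Complex.log_one, mul_zero, Complex.exp_zero, mul_one]
  have hFk : ∀ z : ℂ, g.eval z ≠ 0 → F z ^ k = g.eval z := by
    intro z hz
    rw [hFdef]; simp only
    rw [mul_pow, hβk, ← Complex.exp_nat_mul,
      show (k : ℂ) * ((k : ℂ)⁻¹ * Complex.log (g.eval z / g.eval α))
        = Complex.log (g.eval z / g.eval α) by field_simp,
      Complex.exp_log (div_ne_zero hz hgα)]
    field_simp
  set h : ℂ → ℂ := fun z => (z - α) * F z with hhdef
  have hhα : h α = 0 := by rw [hhdef]; simp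
  have hPh : ∀ z : ℂ, g.eval z ≠ 0 → P.eval z = a + h z ^ k := by
    intro z hz
    rw [heval z, hhdef]; simp only
    rw [mul_pow, hFk z hz]
  -- strict derivative of h at α is β ≠ 0
  have hG : HasStrictDerivAt (fun z : ℂ => g.eval z / g.eval α)
      ((derivative g).eval α / g.eval α) α := (g.hasStrictDerivAt α).div_const _
  have hlog : HasStrictDerivAt (fun z : ℂ => Complex.log (g.eval z / g.eval α))
      ((1 : ℂ)⁻¹ * ((derivative g).eval α / g.eval α)) α := by
    have h2 : HasStrictDerivAt Complex.log ((1 : ℂ))⁻¹ (g.eval α / g.eval α) := by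
      rw [hGα]; exact Complex.hasStrictDerivAt_log Complex.one_mem_slitPlane
    exact h2.comp α hG
  obtain ⟨cF, hFd⟩ : ∃ c, HasStrictDerivAt F c α :=
    ⟨_, ((Complex.hasStrictDerivAt_exp _).comp α (hlog.const_mul ((k : ℂ)⁻¹))).const_mul β⟩
  have hh : HasStrictDerivAt h β α := by
    have hsub := HasStrictDerivAt.sub (hasStrictDerivAt_id α) (hasStrictDerivAt_const α α)
    have hval := HasStrictDerivAt.mul hsub hFd
    have heq : ((1 : ℂ) - 0) * F α + ((id - fun _ => α : ℂ → ℂ) α) * cF = β := by simp [hFα]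
    rw [heq] at hval
    exact hval
  -- local inverse of h near α
  have hhe := hh.hasStrictFDerivAt_equiv hβ0
  set ψ : ℂ → ℂ := hhe.localInverse h _ α with hψdef
  have hψ0 : ψ 0 = α := by
    have := hhe.localInverse_apply_image
    rwa [hhα] at this
  have hψd : HasStrictDerivAt ψ β⁻¹ 0 := by
    have := hh.to_localInverse (hf' := hβ0)
    rwa [hhα] at this
  have hrinv : ∀ᶠ y in 𝓝 (0 : ℂ), h (ψ y) = y := by
    have := hhe.eventually_right_inverse
    rwa [hhα] at this
  have hψcont : ContinuousAt ψ 0 := by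
    have := hhe.localInverse_continuousAt
    rwa [hhα] at this
  -- the rotation ω and direction v
  set ω : ℂ := Complex.exp (2 * (Real.pi : ℂ) * Complex.I / k) with hωdef
  have hωk : ω ^ k = 1 := by
    rw [hωdef, ← Complex.exp_nat_mul,
      show (k : ℂ) * (2 * (Real.pi : ℂ) * Complex.I / k)
        = 2 * (Real.pi : ℂ) * Complex.I by field_simp,
      Complex.exp_two_pi_mul_I]
  have h2πI : (2 * (Real.pi : ℂ) * Complex.I) ≠ 0 := by
    simp [Real.pi_ne_zero, Complex.I_ne_zero, Complex.ofReal_ne_zero]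
  have hω1 : ω ≠ 1 := by
    rw [hωdef]
    intro hcontr
    obtain ⟨n, hn⟩ := Complex.exp_eq_one_iff.mp hcontr
    have hnk : ((n * k : ℤ) : ℂ) = 1 := by
      push_cast
      have : 2 * (Real.pi : ℂ) * Complex.I = (n : ℂ) * (2 * (Real.pi : ℂ) * Complex.I) * k := by
        calc 2 * (Real.pi : ℂ) * Complex.I
            = (2 * (Real.pi : ℂ) * Complex.I / k) * k := by field_simp
          _ = (n : ℂ) * (2 * (Real.pi : ℂ) * Complex.I) * k := by rw [hn]
      have h2 : ((n : ℂ) * (k : ℂ) - 1) * (2 * (Real.pi : ℂ) * Complex.I) = 0 := by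
        linear_combination -this
      rcases mul_eq_zero.mp h2 with h3 | h3
      · linear_combination h3
      · exact absurd h3 h2πI
    have hnk' : n * (k : ℤ) = 1 := by exact_mod_cast hnk
    have : (k : ℤ) ≤ 1 := Int.le_of_dvd one_pos ⟨n, by linarith⟩
    omega
  set v : ℂ := α * β * Complex.exp (((Real.pi - Real.pi / k : ℝ) : ℂ) * Complex.I) with hvdef
  have hα0 : α ≠ 0 := by
    intro h'; rw [h'] at hα; simp at hα
  have hv0 : v ≠ 0 := by
    rw [hvdef]
    exact mul_ne_zero (mul_ne_zero hα0 hβ0) (Complex.exp_ne_zero _)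
  have hconjα : (starRingEnd ℂ) α * α = 1 := by
    rw [mul_comm, Complex.mul_conj]
    have : Complex.normSq α = 1 := by
      have := Complex.normSq_eq_norm_sq α
      rw [this, hα]; norm_num
    rw [this]; norm_num
  have hcosk : 0 < Real.cos (Real.pi / k) := by
    have hπk1 : Real.pi / k ≤ Real.pi / 3 :=
      div_le_div_of_nonneg_left Real.pi_pos.le (by norm_num) (by exact_mod_cast hk3)
    have hπk0 : 0 < Real.pi / k := by
      apply div_pos Real.pi_pos
      exact_mod_cast (by omega : 0 < k)
    refine Real.cos_pos_of_mem_Ioo ⟨by linarith [Real.pi_pos], ?_⟩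
    have : Real.pi / 3 < Real.pi / 2 :=
      div_lt_div_of_pos_left Real.pi_pos (by norm_num) (by norm_num)
    linarith
  have hA0 : (starRingEnd ℂ) α * (v * β⁻¹)
      = Complex.exp (((Real.pi - Real.pi / k : ℝ) : ℂ) * Complex.I) := by
    calc (starRingEnd ℂ) α * (v * β⁻¹)
        = ((starRingEnd ℂ) α * α) * (β * β⁻¹)
            * Complex.exp (((Real.pi - Real.pi / k : ℝ) : ℂ) * Complex.I) := by
          rw [hvdef]; ring
      _ = Complex.exp (((Real.pi - Real.pi / k : ℝ) : ℂ) * Complex.I) := by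
          rw [hconjα, mul_inv_cancel₀ hβ0]; ring
  have hA0re : ((starRingEnd ℂ) α * (v * β⁻¹)).re < 0 := by
    rw [hA0, Complex.exp_ofReal_mul_I_re, Real.cos_pi_sub]
    linarith
  have hA1 : (starRingEnd ℂ) α * ((ω * v) * β⁻¹)
      = Complex.exp (((Real.pi + Real.pi / k : ℝ) : ℂ) * Complex.I) := by
    have : (starRingEnd ℂ) α * ((ω * v) * β⁻¹)
        = ω * ((starRingEnd ℂ) α * (v * β⁻¹)) := by ring
    rw [this, hA0, hωdef, ← Complex.exp_add]
    congr 1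
    push_cast
    field_simp
    ring
  have hA1re : ((starRingEnd ℂ) α * ((ω * v) * β⁻¹)).re < 0 := by
    rw [hA1, Complex.exp_ofReal_mul_I_re]
    have : Real.cos (Real.pi + Real.pi / k) = -Real.cos (Real.pi / k) := by
      rw [Real.cos_add]; simp [Real.cos_pi, Real.sin_pi]
    rw [this]; linarith
  -- eventual facts along the two rays
  have hE0 : ∀ᶠ t : ℝ in 𝓝[>] (0:ℝ), ‖ψ ((t : ℂ) * v)‖ < 1 :=
    norm_lt_one_eventually hψd hψ0 hα v hA0re
  have hE1 : ∀ᶠ t : ℝ in 𝓝[>] (0:ℝ), ‖ψ ((t : ℂ) * (ω * v))‖ < 1 :=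
    norm_lt_one_eventually hψd hψ0 hα (ω * v) hA1re
  have htend : ∀ c : ℂ, Tendsto (fun t : ℝ => (t : ℂ) * c) (𝓝[>] (0:ℝ)) (𝓝 (0 : ℂ)) := by
    intro c
    have hcont : Continuous fun t : ℝ => (t : ℂ) * c :=
      Complex.continuous_ofReal.mul continuous_const
    have h2 : Tendsto (fun t : ℝ => (t : ℂ) * c) (𝓝[>] (0:ℝ)) (𝓝 (((0:ℝ) : ℂ) * c)) :=
      (hcont.tendsto 0).mono_left nhdsWithin_le_nhds
    simpa using h2
  have hE2 : ∀ᶠ t : ℝ in 𝓝[>] (0:ℝ), h (ψ ((t : ℂ) * v)) = (t : ℂ) * v :=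
    (htend v).eventually hrinv
  have hE3 : ∀ᶠ t : ℝ in 𝓝[>] (0:ℝ), h (ψ ((t : ℂ) * (ω * v))) = (t : ℂ) * (ω * v) :=
    (htend (ω * v)).eventually hrinv
  have hgne : ∀ᶠ y in 𝓝 (0 : ℂ), g.eval (ψ y) ≠ 0 := by
    have hcont : ContinuousAt (fun y => g.eval (ψ y)) 0 :=
      ((g.continuous_aeval).continuousAt).comp hψcont
    have : (fun y => g.eval (ψ y)) 0 ≠ 0 := by simpa [hψ0] using hgα
    exact hcont.eventually_ne this
  have hE4 : ∀ᶠ t : ℝ in 𝓝[>] (0:ℝ), g.eval (ψ ((t : ℂ) * v)) ≠ 0 :=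
    (htend v).eventually hgne
  have hE5 : ∀ᶠ t : ℝ in 𝓝[>] (0:ℝ), g.eval (ψ ((t : ℂ) * (ω * v))) ≠ 0 :=
    (htend (ω * v)).eventually hgne
  obtain ⟨t, ⟨⟨h1, h2⟩, ⟨h3, h4⟩⟩, ⟨h5, h6⟩, ht⟩ :=
    (((hE0.and hE1).and (hE2.and hE3)).and
      ((hE4.and hE5).and self_mem_nhdsWithin)).exists
  have ht0 : (0:ℝ) < t := ht
  set z₀ : ℂ := ψ ((t : ℂ) * v) with hz₀
  set z₁ : ℂ := ψ ((t : ℂ) * (ω * v)) with hz₁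
  have hz₀mem : z₀ ∈ Metric.ball (0 : ℂ) 1 := by
    rw [mem_ball_zero_iff]; exact h1
  have hz₁mem : z₁ ∈ Metric.ball (0 : ℂ) 1 := by
    rw [mem_ball_zero_iff]; exact h2
  have hPeq : P.eval z₀ = P.eval z₁ := by
    rw [hPh z₀ h5, hPh z₁ h6, h3, h4]
    have : ((t : ℂ) * (ω * v)) ^ k = ((t : ℂ) * v) ^ k := by
      rw [show (t : ℂ) * (ω * v) = ω * ((t : ℂ) * v) by ring, mul_pow, hωk, one_mul]
    rw [this]
  have hzne : z₀ ≠ z₁ := by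
    intro he
    have heq : (t : ℂ) * (ω * v) = (t : ℂ) * v := by rw [← h4, ← he, h3]
    have ht0' : (t : ℂ) ≠ 0 := by exact_mod_cast ne_of_gt ht0
    have h7 : ω * v = v := mul_left_cancel₀ ht0' heq
    have h8 : (ω - 1) * v = 0 := by linear_combination h7
    rcases mul_eq_zero.mp h8 with h9 | h9
    · exact hω1 (by linear_combination h9)
    · exact hv0 h9
  exact hzne (hinj hz₀mem hz₁mem hPeq)
end
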